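/- arXiv:1109.3336 — 4 statements merged into one kernel-verified Lean document; each statement's English description precedes it below -/
import Mathlib

section
/- With Θ ∈ ℝ^{m×m} the matrix with entries Θ_ij = ⟨φ_i, φ_j⟩_{L²}, the defect satisfies the identity D_m(Φ) = ‖K − K^{−1/2} Θ K^{−1/2}‖₂, where ‖·‖₂ denotes the ℓ₂-operator norm of a matrix and K^{−1/2} is the inverse of the symmetric positive definite square root of K. -/
open scoped RealInnerProductSpace BigOperators
open Matrix
open scoped MatrixOrder Matrix.Norms.L2Operator

noncomputable section

lemma conj_quad {m : ℕ} (S M : Matrix (Fin m) (Fin m) ℝ) (hS : Sᵀ = S) (c : Fin m → ℝ) :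
    (S *ᵥ c) ⬝ᵥ (M *ᵥ (S *ᵥ c)) = c ⬝ᵥ ((S * M * S) *ᵥ c) := by
  have h1 : S *ᵥ c = c ᵥ* S := by rw [← hS, Matrix.mulVec_transpose, hS]
  rw [Matrix.dotProduct_mulVec, h1, Matrix.vecMul_vecMul, ← h1,
    ← Matrix.dotProduct_mulVec, Matrix.mulVec_mulVec]

lemma sup_abs_inner_eq_norm {E : Type*} [NormedAddCommGroup E] [InnerProductSpace ℝ E]
    [CompleteSpace E] (T : E →L[ℝ] E) (hT : IsSelfAdjoint T) :
    sSup { d : ℝ | ∃ x : E, ‖x‖ ≤ 1 ∧ d = |(⟪x, T x⟫ : ℝ)| } = ‖T‖ := by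
  have hTs : ∀ x y : E, (⟪T x, y⟫ : ℝ) = ⟪x, T y⟫ := hT.isSymmetric
  set S : Set ℝ := { d : ℝ | ∃ x : E, ‖x‖ ≤ 1 ∧ d = |(⟪x, T x⟫ : ℝ)| } with hS
  have h0 : (0 : ℝ) ∈ S := ⟨0, by simp⟩
  have hub : ∀ d ∈ S, d ≤ ‖T‖ := by
    rintro d ⟨x, hx, rfl⟩
    calc |(⟪x, T x⟫ : ℝ)| ≤ ‖x‖ * ‖T x‖ := abs_real_inner_le_norm x (T x)
      _ ≤ ‖x‖ * (‖T‖ * ‖x‖) := by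
          exact mul_le_mul_of_nonneg_left (T.le_opNorm x) (norm_nonneg x)
      _ = ‖T‖ * ‖x‖^2 := by ring
      _ ≤ ‖T‖ * 1 := mul_le_mul_of_nonneg_left (by nlinarith [norm_nonneg x]) (norm_nonneg _)
      _ = ‖T‖ := mul_one _
  have hbdd : BddAbove S := ⟨‖T‖, hub⟩
  refine le_antisymm (csSup_le ⟨0, h0⟩ hub) ?_
  set M := sSup S with hM
  have hM0 : 0 ≤ M := le_csSup hbdd h0
  have key : ∀ x : E, |(⟪x, T x⟫ : ℝ)| ≤ M * ‖x‖ ^ 2 := by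
    intro x
    rcases eq_or_ne x 0 with rfl | hx
    · simp
    · have hnx : (0:ℝ) < ‖x‖ := norm_pos_iff.2 hx
      have hu : ‖(‖x‖⁻¹ • x)‖ ≤ 1 := by
        rw [norm_smul, norm_inv, norm_norm, inv_mul_cancel₀ hnx.ne']
      have hmem : |(⟪(‖x‖⁻¹ • x), T (‖x‖⁻¹ • x)⟫ : ℝ)| ∈ S := ⟨_, hu, rfl⟩
      have hle := le_csSup hbdd hmem
      have hexp : (⟪(‖x‖⁻¹ • x), T (‖x‖⁻¹ • x)⟫ : ℝ) = ‖x‖⁻¹ ^ 2 * ⟪x, T x⟫ := by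
        rw [_root_.map_smul, real_inner_smul_left, real_inner_smul_right]
        ring
      rw [hexp, abs_mul, abs_of_nonneg (by positivity : (0:ℝ) ≤ ‖x‖⁻¹ ^ 2)] at hle
      have : ‖x‖⁻¹ ^ 2 * |(⟪x, T x⟫ : ℝ)| * ‖x‖^2 ≤ M * ‖x‖^2 := by nlinarith
      calc |(⟪x, T x⟫ : ℝ)| = ‖x‖⁻¹ ^ 2 * |(⟪x, T x⟫ : ℝ)| * ‖x‖^2 := by
            field_simp
        _ ≤ M * ‖x‖ ^ 2 := this
  have hpol : ∀ x y : E, 4 * (⟪x, T y⟫ : ℝ) =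
      ⟪x + y, T (x + y)⟫ - ⟪x - y, T (x - y)⟫ := by
    intro x y
    have h1 : (⟪y, T x⟫ : ℝ) = ⟪x, T y⟫ := by
      rw [real_inner_comm]; exact hTs x y
    simp only [_root_.map_add, _root_.map_sub, inner_add_left, inner_add_right, inner_sub_left,
      inner_sub_right]
    linarith
  have hbound : ∀ x y : E, 4 * (⟪x, T y⟫ : ℝ) ≤ 2 * M * (‖x‖^2 + ‖y‖^2) := by
    intro x y
    have h1 := key (x + y)
    have h2 := key (x - y)
    have hpar : ‖x + y‖^2 + ‖x - y‖^2 = 2 * (‖x‖^2 + ‖y‖^2) := by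
      have := norm_add_sq_real x y
      have := norm_sub_sq_real x y
      linarith
    have := hpol x y
    have ha : (⟪x + y, T (x + y)⟫ : ℝ) ≤ M * ‖x + y‖^2 := (abs_le.1 h1).2
    have hb : -(M * ‖x - y‖^2) ≤ (⟪x - y, T (x - y)⟫ : ℝ) := (abs_le.1 h2).1
    nlinarith
  refine T.opNorm_le_bound hM0 (fun y => ?_) |>.trans (le_of_eq rfl)
  rcases eq_or_ne (T y) 0 with hTy | hTy
  · simp [hTy]; positivity
  · have hnTy : (0:ℝ) < ‖T y‖ := norm_pos_iff.2 hTy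
    set x := (‖y‖ / ‖T y‖) • T y with hx
    have hxin : (⟪x, T y⟫ : ℝ) = ‖y‖ * ‖T y‖ := by
      rw [hx, real_inner_smul_left, real_inner_self_eq_norm_sq]
      field_simp
    have hxn : ‖x‖ = ‖y‖ := by
      rw [hx, norm_smul, Real.norm_eq_abs, abs_div, abs_of_nonneg (norm_nonneg y),
        abs_of_nonneg (norm_nonneg (T y))]
      field_simp
    have := hbound x y
    rw [hxin, hxn] at this
    rcases eq_or_ne y 0 with rfl | hy
    · simp
    · have hny : (0:ℝ) < ‖y‖ := norm_pos_iff.2 hy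
      nlinarith

/-- Lemma 2 of the paper: computing the defect `D_m(Φ)`.
`H` is a Hilbert space of functions continuously embedded (via `ι`) in `L²` (modelled by a
Hilbert space `L`); `Φ f = (⟪φ₁,f⟫_H, …, ⟪φ_m,f⟫_H)` for linearly independent `φⱼ ∈ H`,
`K i j = ⟪φᵢ,φⱼ⟫_H` is positive definite, `Θ i j = ⟪φᵢ,φⱼ⟫_{L²}`, and
`D_m(Φ) = sup{ |‖Φ f‖₂² − ‖f‖²_{L²}| : f ∈ Range Φ* = span φ, ‖f‖_H ≤ 1 }`.
Then `D_m(Φ) = ‖K − K^{-1/2} Θ K^{-1/2}‖₂` (ℓ₂-operator norm), with `K^{-1/2}` the inverse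
of the symmetric positive definite square root of `K`. -/
theorem sampled_fpca_defect_identity
    {H : Type*} [NormedAddCommGroup H] [InnerProductSpace ℝ H]
    {L : Type*} [NormedAddCommGroup L] [InnerProductSpace ℝ L]
    (ι : H →L[ℝ] L) (hι : Function.Injective ι)
    {m : ℕ} (φ : Fin m → H) (hφ : LinearIndependent ℝ φ)
    (K Θ : Matrix (Fin m) (Fin m) ℝ)
    (hK : ∀ i j, K i j = ⟪φ i, φ j⟫)
    (hΘ : ∀ i j, Θ i j = ⟪ι (φ i), ι (φ j)⟫)
    (hKpd : K.PosDef) :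
    sSup { d : ℝ | ∃ f ∈ Submodule.span ℝ (Set.range φ), ‖f‖ ≤ 1 ∧
        d = |(∑ j, (⟪φ j, f⟫ : ℝ)^2) - ‖ι f‖^2| } =
      ‖Matrix.toEuclideanCLM (𝕜 := ℝ)
        (K - (CFC.sqrt K)⁻¹ * Θ * (CFC.sqrt K)⁻¹)‖ := by
  classical
  set Sm := CFC.sqrt K with hSmdef
  have hSm2 : Sm * Sm = K := CFC.sqrt_mul_sqrt_self K hKpd.posSemidef.nonneg
  have hSmH : Smᵀ = Sm := by
    have h := (CFC.sqrt_nonneg K).posSemidef.1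
    rwa [Matrix.IsHermitian, Matrix.conjTranspose_eq_transpose_of_trivial] at h
  have hdet : IsUnit Sm.det := by
    have h1 : Sm.det * Sm.det = K.det := by rw [← Matrix.det_mul, hSm2]
    have h2 : 0 < K.det := hKpd.det_pos
    refine isUnit_iff_ne_zero.2 (fun h => ?_)
    rw [h, mul_zero] at h1
    linarith
  have hinv1 : Sm * Sm⁻¹ = 1 := Matrix.mul_nonsing_inv _ hdet
  have hinv2 : Sm⁻¹ * Sm = 1 := Matrix.nonsing_inv_mul _ hdet
  have hKsym : Kᵀ = K := by
    ext i j; simp only [Matrix.transpose_apply, hK]; exact real_inner_comm _ _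
  have hΘsym : Θᵀ = Θ := by
    ext i j; simp only [Matrix.transpose_apply, hΘ]; exact real_inner_comm _ _
  set A := K - Sm⁻¹ * Θ * Sm⁻¹ with hA
  have hSmIT : (Sm⁻¹)ᵀ = Sm⁻¹ := by rw [Matrix.transpose_nonsing_inv, hSmH]
  have hAsym : Aᵀ = A := by
    rw [hA, Matrix.transpose_sub, hKsym, Matrix.transpose_mul, Matrix.transpose_mul,
      hSmIT, hΘsym, Matrix.mul_assoc]
  have e1 : Sm * K * Sm = K * K := by
    rw [← hSm2]; noncomm_ring
  have e2 : Sm * (Sm⁻¹ * Θ * Sm⁻¹) * Sm = Θ := by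
    calc Sm * (Sm⁻¹ * Θ * Sm⁻¹) * Sm = (Sm * Sm⁻¹) * Θ * (Sm⁻¹ * Sm) := by noncomm_ring
      _ = Θ := by rw [hinv1, hinv2, one_mul, mul_one]
  have hSAS : Sm * A * Sm = K * K - Θ := by
    have h3 : Sm * A * Sm = Sm * K * Sm - Sm * (Sm⁻¹ * Θ * Sm⁻¹) * Sm := by
      rw [hA]; noncomm_ring
    rw [h3, e1, e2]
  set T := Matrix.toEuclideanCLM (𝕜 := ℝ) A with hT
  have hTsa : IsSelfAdjoint T := by
    have hAsa : IsSelfAdjoint A := by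
      show star A = A
      rw [Matrix.star_eq_conjTranspose, Matrix.conjTranspose_eq_transpose_of_trivial, hAsym]
    exact hAsa.map (Matrix.toEuclideanCLM (𝕜 := ℝ))
  -- core computation
  have main : ∀ c : Fin m → ℝ,
      (‖(∑ i, c i • φ i : H)‖ = ‖((WithLp.equiv 2 (Fin m → ℝ)).symm (Sm *ᵥ c) : EuclideanSpace ℝ (Fin m))‖) ∧
      ((∑ j, (⟪φ j, (∑ i, c i • φ i : H)⟫ : ℝ)^2) - ‖ι (∑ i, c i • φ i)‖^2
        = ⟪((WithLp.equiv 2 (Fin m → ℝ)).symm (Sm *ᵥ c) : EuclideanSpace ℝ (Fin m)),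
            T ((WithLp.equiv 2 (Fin m → ℝ)).symm (Sm *ᵥ c))⟫) := by
    intro c
    set f : H := ∑ i, c i • φ i with hf
    set x : EuclideanSpace ℝ (Fin m) := (WithLp.equiv 2 (Fin m → ℝ)).symm (Sm *ᵥ c) with hxdef
    have hφf : ∀ j, (⟪φ j, f⟫ : ℝ) = (K *ᵥ c) j := by
      intro j
      rw [hf, inner_sum]
      simp only [real_inner_smul_right, Matrix.mulVec, dotProduct, hK]
      exact Finset.sum_congr rfl (fun i _ => mul_comm _ _)
    have hnf : ‖f‖^2 = c ⬝ᵥ (K *ᵥ c) := by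
      rw [← real_inner_self_eq_norm_sq]
      conv_lhs => rw [hf]
      rw [sum_inner]
      simp only [real_inner_smul_left, ← hf, hφf]
      rfl
    have hιf : ι f = ∑ i, c i • ι (φ i) := by
      rw [hf, map_sum]; simp [_root_.map_smul]
    have hnι : ‖ι f‖^2 = c ⬝ᵥ (Θ *ᵥ c) := by
      rw [← real_inner_self_eq_norm_sq]
      have h1 : (⟪ι f, ι f⟫ : ℝ) = ∑ i, ∑ j, c i * (c j * Θ i j) := by
        conv_lhs => rw [hιf]
        rw [sum_inner]
        refine Finset.sum_congr rfl (fun i _ => ?_)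
        rw [real_inner_smul_left, inner_sum]
        rw [Finset.mul_sum]
        refine Finset.sum_congr rfl (fun j _ => ?_)
        rw [real_inner_smul_right, hΘ]
      rw [h1]
      simp only [dotProduct, Matrix.mulVec, Finset.mul_sum]
      refine Finset.sum_congr rfl (fun i _ => Finset.sum_congr rfl (fun j _ => by ring))
    have hdot : ∀ u v : Fin m → ℝ,
        (⟪((WithLp.equiv 2 (Fin m → ℝ)).symm u : EuclideanSpace ℝ (Fin m)),
          ((WithLp.equiv 2 (Fin m → ℝ)).symm v : EuclideanSpace ℝ (Fin m))⟫ : ℝ) = u ⬝ᵥ v := by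
      intro u v
      rw [PiLp.inner_apply]
      simp [dotProduct, RCLike.inner_apply, mul_comm]
    have hnx : ‖x‖^2 = c ⬝ᵥ (K *ᵥ c) := by
      rw [← real_inner_self_eq_norm_sq, hxdef, hdot]
      have := conj_quad Sm 1 hSmH c
      rw [Matrix.one_mulVec] at this
      rw [this, mul_one, hSm2]
    have hfx : ‖f‖ = ‖x‖ := by
      have h : ‖f‖^2 = ‖x‖^2 := by rw [hnf, hnx]
      calc ‖f‖ = Real.sqrt (‖f‖^2) := (Real.sqrt_sq (norm_nonneg f)).symm
        _ = Real.sqrt (‖x‖^2) := by rw [h]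
        _ = ‖x‖ := Real.sqrt_sq (norm_nonneg x)
    have hsum : (∑ j, (⟪φ j, f⟫ : ℝ)^2) = c ⬝ᵥ ((K * K) *ᵥ c) := by
      have h1 : (∑ j, (⟪φ j, f⟫ : ℝ)^2) = (K *ᵥ c) ⬝ᵥ (K *ᵥ c) := by
        simp only [hφf, dotProduct, pow_two]
      have h2 := conj_quad K 1 hKsym c
      rw [Matrix.one_mulVec] at h2
      rw [h1, h2, mul_one]
    have hinner : (⟪x, T x⟫ : ℝ) = c ⬝ᵥ ((K * K) *ᵥ c) - c ⬝ᵥ (Θ *ᵥ c) := by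
      rw [hxdef, hT, (show ∀ v, Matrix.toEuclideanCLM (𝕜 := ℝ) A ((WithLp.equiv 2 (Fin m → ℝ)).symm v) =
          (WithLp.equiv 2 (Fin m → ℝ)).symm (Matrix.toLin' A v) from fun _ => rfl), hdot, Matrix.toLin'_apply, conj_quad Sm A hSmH c,
        hSAS, Matrix.sub_mulVec, dotProduct_sub]
    exact ⟨hfx, by rw [hsum, hnι, hinner]⟩
  have hset : { d : ℝ | ∃ f ∈ Submodule.span ℝ (Set.range φ), ‖f‖ ≤ 1 ∧
        d = |(∑ j, (⟪φ j, f⟫ : ℝ)^2) - ‖ι f‖^2| }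
      = { d : ℝ | ∃ x : EuclideanSpace ℝ (Fin m), ‖x‖ ≤ 1 ∧ d = |(⟪x, T x⟫ : ℝ)| } := by
    ext d
    constructor
    · rintro ⟨f, hfspan, hf1, rfl⟩
      obtain ⟨c, rfl⟩ := (Submodule.mem_span_range_iff_exists_fun ℝ).1 hfspan
      obtain ⟨h1, h2⟩ := main c
      exact ⟨_, by rw [← h1]; exact hf1, by rw [h2]⟩
    · rintro ⟨x, hx1, rfl⟩
      set c : Fin m → ℝ := Sm⁻¹ *ᵥ (WithLp.equiv 2 (Fin m → ℝ) x) with hc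
      have hxc : ((WithLp.equiv 2 (Fin m → ℝ)).symm (Sm *ᵥ c) : EuclideanSpace ℝ (Fin m)) = x := by
        rw [hc, Matrix.mulVec_mulVec, hinv1, Matrix.one_mulVec]
        exact (WithLp.equiv 2 (Fin m → ℝ)).symm_apply_apply x
      obtain ⟨h1, h2⟩ := main c
      rw [hxc] at h1 h2
      refine ⟨∑ i, c i • φ i, ?_, by rw [h1]; exact hx1, by rw [h2]⟩
      exact Submodule.sum_mem _ (fun i _ =>
        Submodule.smul_mem _ _ (Submodule.subset_span ⟨i, rfl⟩))
  rw [hset]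
  exact sup_abs_inner_eq_norm T hTsa
end
end

section
/- Suppose f*₁,…,f*_r ∈ H satisfy ‖f*_j‖_H ≤ ρ for each j, and the vectors z*_j := Φf*_j satisfy C_m(f*) := max_{1≤i,j≤r} |⟨z*_i, z*_j⟩_{ℝ^m} − δ_ij| ≤ 1/(2r). Then there exists a matrix Z̃* ∈ ℝ^{m×r} with orthonormal columns ((Z̃*)ᵀZ̃* = I_r) such that Range(Z̃*) = Range(Z*) and tr(K⁻¹ Z̃*(Z̃*)ᵀ) ≤ 2rρ², where Z* := (z*₁, …, z*_r) ∈ ℝ^{m×r}. -/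
open scoped RealInnerProductSpace BigOperators
open Matrix

noncomputable section

private lemma aux_trace_nonneg {n : ℕ} {N : Matrix (Fin n) (Fin n) ℝ} (hN : N.PosSemidef) :
    0 ≤ N.trace := by
  refine Finset.sum_nonneg fun i _ => ?_
  simpa [Matrix.mulVec_single, single_dotProduct] using hN.dotProduct_mulVec_nonneg (Pi.single i 1)

open scoped MatrixOrder in
private lemma aux_sqrt {n : ℕ} {A : Matrix (Fin n) (Fin n) ℝ} (hA : A.PosSemidef) :
    ∃ S : Matrix (Fin n) (Fin n) ℝ, S.PosSemidef ∧ S * S = A :=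
  ⟨CFC.sqrt A, (CFC.sqrt_nonneg A).posSemidef, CFC.sqrt_mul_sqrt_self A hA.nonneg⟩

private lemma aux_trace_mul_nonneg {n : ℕ} {A B : Matrix (Fin n) (Fin n) ℝ}
    (hA : A.PosSemidef) (hB : B.PosSemidef) : 0 ≤ (A * B).trace := by
  obtain ⟨R, hRpsd, hRR⟩ := aux_sqrt hA
  have h1 : A = R * R := hRR.symm
  rw [h1, ← Matrix.trace_mul_cycle]
  have hpsd := hB.mul_mul_conjTranspose_same R
  rw [hRpsd.1.eq] at hpsd
  exact aux_trace_nonneg hpsd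

private lemma aux_quad {r : ℕ} {G : Matrix (Fin r) (Fin r) ℝ}
    (hG : ∀ i j, |G i j - (if i = j then (1:ℝ) else 0)| ≤ 1 / (2 * r)) (x : Fin r → ℝ) :
    (∑ i, x i ^ 2) / 2 ≤ x ⬝ᵥ (G *ᵥ x) := by
  rcases Nat.eq_zero_or_pos r with hr | hr
  · subst hr
    simp [dotProduct]
  · set S := ∑ i, |x i| with hS
    have hSnn : 0 ≤ S := Finset.sum_nonneg fun i _ => abs_nonneg _
    have hrpos : (0:ℝ) < r := by exact_mod_cast hr
    have hrow : ∀ i, |(G *ᵥ x) i - x i| ≤ S / (2 * r) := by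
      intro i
      have h1 : (G *ᵥ x) i - x i = ∑ j, (G i j - if i = j then 1 else 0) * x j := by
        simp [Matrix.mulVec, dotProduct, sub_mul, Finset.sum_sub_distrib, ite_mul,
          Finset.sum_ite_eq]
      rw [h1]
      calc |∑ j, (G i j - if i = j then 1 else 0) * x j|
          ≤ ∑ j, |(G i j - if i = j then 1 else 0) * x j| := Finset.abs_sum_le_sum_abs _ _
        _ ≤ ∑ j, (1 / (2 * r)) * |x j| := by
            refine Finset.sum_le_sum fun j _ => ?_
            rw [abs_mul]
            exact mul_le_mul_of_nonneg_right (hG i j) (abs_nonneg _)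
        _ = S / (2 * r) := by rw [← Finset.mul_sum, ← hS]; ring
    have hd : x ⬝ᵥ (G *ᵥ x) - ∑ i, x i ^ 2 = ∑ i, x i * ((G *ᵥ x) i - x i) := by
      simp [dotProduct, mul_sub, Finset.sum_sub_distrib, sq]
    have habs : |∑ i, x i * ((G *ᵥ x) i - x i)| ≤ S * (S / (2 * r)) := by
      calc |∑ i, x i * ((G *ᵥ x) i - x i)|
          ≤ ∑ i, |x i * ((G *ᵥ x) i - x i)| := Finset.abs_sum_le_sum_abs _ _
        _ ≤ ∑ i, |x i| * (S / (2 * r)) := by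
            refine Finset.sum_le_sum fun i _ => ?_
            rw [abs_mul]
            exact mul_le_mul_of_nonneg_left (hrow i) (abs_nonneg _)
        _ = S * (S / (2 * r)) := by rw [← Finset.sum_mul, ← hS]
    have hS2 : S ^ 2 ≤ r * ∑ i, x i ^ 2 := by
      have h := sq_sum_le_card_mul_sum_sq (s := (Finset.univ : Finset (Fin r)))
        (f := fun i => |x i|)
      simpa [sq_abs, hS] using h
    have h1 : ∑ i, x i ^ 2 - S * (S / (2 * r)) ≤ x ⬝ᵥ (G *ᵥ x) := by
      have := (abs_le.mp habs).1
      linarith [hd]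
    have h2 : S * (S / (2 * r)) ≤ (∑ i, x i ^ 2) / 2 := by
      have he : S * (S / (2 * r)) = S ^ 2 / (2 * r) := by ring
      rw [he, div_le_iff₀ (by positivity)]
      calc S ^ 2 ≤ r * ∑ i, x i ^ 2 := hS2
        _ = (∑ i, x i ^ 2) / 2 * (2 * r) := by ring
    linarith

/-- Lemma 3 of the paper: existence of a feasible orthonormal version of `Z*`.
`H` is a Hilbert space of functions embedded in `L²`, `Φ f = (⟪φ₁,f⟫, …, ⟪φ_m,f⟫)` with
`φⱼ ∈ H` linearly independent and `K i j = ⟪φᵢ,φⱼ⟫` positive definite, `r ≤ m`, `ρ > 0`.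
If `f*₁,…,f*_r ∈ H` satisfy `‖f*ⱼ‖_H ≤ ρ` and the vectors `z*ⱼ = Φ f*ⱼ` satisfy
`C_m(f*) = max_{i,j} |⟪z*ᵢ, z*ⱼ⟫ − δ_ij| ≤ 1/(2r)`, then there is `Z̃* ∈ ℝ^{m×r}` with
orthonormal columns, the same column span as `Z* = (z*₁ … z*_r)`, and
`tr(K⁻¹ Z̃* (Z̃*)ᵀ) ≤ 2 r ρ²`. -/
theorem sampled_fpca_feasible_orthonormal_version
    {H : Type*} [NormedAddCommGroup H] [InnerProductSpace ℝ H]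
    {m r : ℕ} (hrm : r ≤ m)
    (φ : Fin m → H) (hφ : LinearIndependent ℝ φ)
    (K : Matrix (Fin m) (Fin m) ℝ) (hK : ∀ i j, K i j = ⟪φ i, φ j⟫) (hKpd : K.PosDef)
    (ρ : ℝ) (hρ : 0 < ρ)
    (fstar : Fin r → H) (hfnorm : ∀ j, ‖fstar j‖ ≤ ρ)
    (zstar : Fin r → Fin m → ℝ) (hz : ∀ j k, zstar j k = ⟪φ k, fstar j⟫)
    (hCm : ∀ i j, |zstar i ⬝ᵥ zstar j - (if i = j then (1:ℝ) else 0)| ≤ 1 / (2 * r)) :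
    ∃ Ztil : Matrix (Fin m) (Fin r) ℝ,
      Ztilᵀ * Ztil = 1 ∧
      LinearMap.range Ztil.mulVecLin =
        LinearMap.range (Matrix.of fun k j => zstar j k).mulVecLin ∧
      Matrix.trace (K⁻¹ * (Ztil * Ztilᵀ)) ≤ 2 * r * ρ^2 := by
  classical
  set Zs : Matrix (Fin m) (Fin r) ℝ := Matrix.of fun k j => zstar j k with hZs
  set G : Matrix (Fin r) (Fin r) ℝ := Zsᵀ * Zs with hGdef
  have hGij : ∀ i j, G i j = zstar i ⬝ᵥ zstar j := by
    intro i j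
    simp [hGdef, hZs, Matrix.mul_apply, dotProduct]
  have hquad : ∀ x : Fin r → ℝ, (∑ i, x i ^ 2) / 2 ≤ x ⬝ᵥ (G *ᵥ x) := by
    intro x
    exact aux_quad (fun i j => by rw [hGij i j]; exact hCm i j) x
  have hGherm : G.IsHermitian := by
    have h := Matrix.posSemidef_conjTranspose_mul_self Zs
    rw [Matrix.conjTranspose_eq_transpose_of_trivial, ← hGdef] at h
    exact h.1
  have hstar : ∀ x : Fin r → ℝ, star x = x := fun x => by funext i; simp
  have hGpd : G.PosDef := by
    refine PosDef.of_dotProduct_mulVec_pos hGherm fun x hx => ?_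
    obtain ⟨i, hi⟩ := Function.ne_iff.mp hx
    have hx2 : 0 < ∑ i, x i ^ 2 :=
      Finset.sum_pos' (fun i _ => sq_nonneg _)
        ⟨i, Finset.mem_univ i, lt_of_le_of_ne (sq_nonneg _) (Ne.symm (pow_ne_zero 2 hi))⟩
    rw [hstar]
    exact lt_of_lt_of_le (by linarith) (hquad x)
  have hGdet : IsUnit G.det := isUnit_iff_ne_zero.mpr hGpd.det_pos.ne'
  have hGinv_pd : G⁻¹.PosDef := hGpd.inv
  obtain ⟨S, hSpsd, hSS⟩ := aux_sqrt hGinv_pd.posSemidef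
  have hSt : Sᵀ = S := by
    rw [← Matrix.conjTranspose_eq_transpose_of_trivial]
    exact hSpsd.1.eq
  have hdetS : IsUnit S.det := by
    have h : IsUnit (S * S).det := by
      rw [hSS]; exact isUnit_iff_ne_zero.mpr hGinv_pd.det_pos.ne'
    rw [Matrix.det_mul] at h
    exact isUnit_of_mul_isUnit_left h
  have h1 : S * G * S * S = S := by
    rw [Matrix.mul_assoc (S * G) S S, hSS, Matrix.mul_assoc S G G⁻¹,
      Matrix.mul_nonsing_inv G hGdet, Matrix.mul_one]
  have hSGS : S * G * S = 1 := by
    have h2 : S * G * S = S * S⁻¹ := by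
      calc S * G * S = S * G * S * (S * S⁻¹) := by
            rw [Matrix.mul_nonsing_inv S hdetS, Matrix.mul_one]
        _ = (S * G * S * S) * S⁻¹ := by simp only [Matrix.mul_assoc]
        _ = S * S⁻¹ := by rw [h1]
    exact h2.trans (Matrix.mul_nonsing_inv S hdetS)
  -- claim 1
  have claim1 : (Zs * S)ᵀ * (Zs * S) = 1 := by
    rw [Matrix.transpose_mul, hSt]
    calc S * Zsᵀ * (Zs * S) = S * (Zsᵀ * Zs) * S := by
          rw [← Matrix.mul_assoc, Matrix.mul_assoc S Zsᵀ Zs]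
      _ = 1 := by rw [← hGdef]; exact hSGS
  -- claim 2
  have claim2 : LinearMap.range (Zs * S).mulVecLin = LinearMap.range Zs.mulVecLin := by
    rw [Matrix.mulVecLin_mul]
    refine LinearMap.range_comp_of_range_eq_top _ (LinearMap.range_eq_top.mpr fun y => ?_)
    exact ⟨S⁻¹ *ᵥ y, by
      rw [Matrix.mulVecLin_apply, Matrix.mulVec_mulVec, Matrix.mul_nonsing_inv S hdetS,
        Matrix.one_mulVec]⟩
  -- the matrix M
  set M : Matrix (Fin r) (Fin r) ℝ := Zsᵀ * K⁻¹ * Zs with hMdef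
  have hMpsd : M.PosSemidef := by
    have h := (hKpd.inv.posSemidef).conjTranspose_mul_mul_same Zs
    rwa [Matrix.conjTranspose_eq_transpose_of_trivial, ← hMdef] at h
  have hZZt : (Zs * S) * (Zs * S)ᵀ = Zs * G⁻¹ * Zsᵀ := by
    rw [Matrix.transpose_mul, hSt]
    calc Zs * S * (S * Zsᵀ) = Zs * (S * S) * Zsᵀ := by
          rw [← Matrix.mul_assoc, Matrix.mul_assoc Zs S S]
      _ = Zs * G⁻¹ * Zsᵀ := by rw [hSS]
  have htr1 : Matrix.trace (K⁻¹ * ((Zs * S) * (Zs * S)ᵀ)) = Matrix.trace (G⁻¹ * M) := by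
    rw [hZZt, hMdef]
    have e1 : K⁻¹ * (Zs * G⁻¹ * Zsᵀ) = (K⁻¹ * Zs * G⁻¹) * Zsᵀ := by
      simp only [Matrix.mul_assoc]
    rw [e1, Matrix.trace_mul_comm]
    have e2 : Zsᵀ * (K⁻¹ * Zs * G⁻¹) = (Zsᵀ * K⁻¹ * Zs) * G⁻¹ := by
      simp only [Matrix.mul_assoc]
    rw [e2, Matrix.trace_mul_comm]
  have hKdet : IsUnit K.det := isUnit_iff_ne_zero.mpr hKpd.det_pos.ne'
  -- diagonal bound
  have hdiag : ∀ j, M j j ≤ ρ ^ 2 := by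
    intro j
    set v : Fin m → ℝ := K⁻¹ *ᵥ zstar j with hv
    have hKv : K *ᵥ v = zstar j := by
      rw [hv, Matrix.mulVec_mulVec, Matrix.mul_nonsing_inv K hKdet, Matrix.one_mulVec]
    set g : H := ∑ k, v k • φ k with hg
    have hMjj : M j j = v ⬝ᵥ zstar j := by
      simp only [hMdef, hv, Matrix.mul_apply, Matrix.mulVec, dotProduct, hZs,
        Matrix.transpose_apply, Matrix.of_apply, Finset.sum_mul, Finset.mul_sum]
      rw [Finset.sum_comm]
      refine Finset.sum_congr rfl fun k _ => Finset.sum_congr rfl fun l _ => by ring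
    have hgf : ⟪g, fstar j⟫ = v ⬝ᵥ zstar j := by
      rw [hg, sum_inner]
      simp [inner_smul_left, hz, dotProduct]
    have hphig : ∀ k, ⟪φ k, g⟫ = (K *ᵥ v) k := by
      intro k
      rw [hg, inner_sum]
      simp [inner_smul_right, Matrix.mulVec, dotProduct, hK, mul_comm]
    have hgg : ⟪g, g⟫ = v ⬝ᵥ zstar j := by
      calc ⟪g, g⟫ = ∑ k, v k * ⟪φ k, g⟫ := by
            rw [hg, sum_inner]
            exact Finset.sum_congr rfl fun k _ => by rw [real_inner_smul_left]
        _ = ∑ k, v k * (K *ᵥ v) k := Finset.sum_congr rfl fun k _ => by rw [hphig]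
        _ = v ⬝ᵥ zstar j := by rw [hKv]; rfl
    have hcs : v ⬝ᵥ zstar j ≤ ‖g‖ * ρ := by
      rw [← hgf]
      exact le_trans (real_inner_le_norm g (fstar j))
        (mul_le_mul_of_nonneg_left (hfnorm j) (norm_nonneg g))
    have hnorm2 : ‖g‖ ^ 2 = v ⬝ᵥ zstar j := by
      rw [← hgg, real_inner_self_eq_norm_sq]
    rw [hMjj, ← hnorm2]
    nlinarith [norm_nonneg g, sq_nonneg (‖g‖ - ρ), hnorm2 ▸ hcs]
  have htrM : M.trace ≤ r * ρ ^ 2 := by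
    calc M.trace = ∑ j, M j j := rfl
      _ ≤ ∑ _j : Fin r, ρ ^ 2 := Finset.sum_le_sum fun j _ => hdiag j
      _ = r * ρ ^ 2 := by simp [Finset.sum_const, nsmul_eq_mul]
  -- 2G - 1 is PSD
  have h2G1 : ((2:ℝ) • G - 1).PosSemidef := by
    refine PosSemidef.of_dotProduct_mulVec_nonneg ?_ ?_
    · show ((2:ℝ) • G - 1)ᴴ = (2:ℝ) • G - 1
      rw [Matrix.conjTranspose_sub, Matrix.conjTranspose_smul, Matrix.conjTranspose_one,
        hGherm.eq, star_trivial]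
    · intro x
      rw [hstar]
      have expand : x ⬝ᵥ (((2:ℝ) • G - 1) *ᵥ x) = 2 * (x ⬝ᵥ (G *ᵥ x)) - x ⬝ᵥ x := by
        rw [Matrix.sub_mulVec, Matrix.smul_mulVec, Matrix.one_mulVec, dotProduct_sub,
          dotProduct_smul]
        simp [smul_eq_mul]
      have hxx : x ⬝ᵥ x = ∑ i, x i ^ 2 := by simp [dotProduct, sq]
      have hq := hquad x
      rw [expand, hxx]
      linarith
  have hA2 : ((2:ℝ) • (1 : Matrix (Fin r) (Fin r) ℝ) - G⁻¹).PosSemidef := by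
    have hcong := h2G1.mul_mul_conjTranspose_same S
    rw [Matrix.conjTranspose_eq_transpose_of_trivial, hSt] at hcong
    have e : S * ((2:ℝ) • G - 1) * S = (2:ℝ) • (1 : Matrix (Fin r) (Fin r) ℝ) - G⁻¹ := by
      have e1 : S * ((2:ℝ) • G - 1) * S = (2:ℝ) • (S * G * S) - S * S := by
        rw [Matrix.mul_sub, Matrix.sub_mul, Matrix.mul_one, Matrix.mul_smul, Matrix.smul_mul]
      rw [e1, hSGS, hSS]
    rwa [e] at hcong
  have htp : 0 ≤ Matrix.trace (((2:ℝ) • (1 : Matrix (Fin r) (Fin r) ℝ) - G⁻¹) * M) :=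
    aux_trace_mul_nonneg hA2 hMpsd
  have hexp : Matrix.trace (((2:ℝ) • (1 : Matrix (Fin r) (Fin r) ℝ) - G⁻¹) * M)
      = 2 * M.trace - Matrix.trace (G⁻¹ * M) := by
    rw [Matrix.sub_mul, Matrix.smul_mul, Matrix.one_mul, Matrix.trace_sub, Matrix.trace_smul]
    simp [smul_eq_mul]
  refine ⟨Zs * S, claim1, claim2, ?_⟩
  rw [htr1]
  calc Matrix.trace (G⁻¹ * M) ≤ 2 * M.trace := by linarith
    _ ≤ 2 * (r * ρ ^ 2) := by linarith
    _ = 2 * r * ρ ^ 2 := by ring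
end
end

section
/- Suppose Θ ⪯ c₀K² in the positive semidefinite order for some constant c₀ > 0, where Θ ∈ ℝ^{m×m} has entries Θ_ij = ⟨φ_i, φ_j⟩_{L²}. Then for all ε, ν > 0, the quantity r_Φ(ε; ν) := sup{ ‖f‖²_{L²} : f ∈ H, ‖f‖_H² ≤ ν², ‖Φf‖₂² ≤ ε² } satisfies r_Φ(ε; ν) ≤ 2c₀ ε² + 2ν² N_m(Φ). -/
open scoped RealInnerProductSpace BigOperators
open Matrix

noncomputable section
set_option maxHeartbeats 1000000

/-- Lemma "REMAIN" of the paper.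
`H` is a Hilbert space of functions embedded (via `ι`) in `L²` (modelled by a Hilbert
space `L`), `Φ f = (⟪φ₁,f⟫, …, ⟪φ_m,f⟫)` with `φⱼ` linearly independent,
`K i j = ⟪φᵢ,φⱼ⟫_H` positive definite, `Θ i j = ⟪φᵢ,φⱼ⟫_{L²}`, and
`N_m(Φ) = sup{ ‖f‖²_{L²} : f ∈ Ker Φ, ‖f‖_H ≤ 1 }`.  Under condition (B1), `Θ ⪯ c₀ K²`
with `c₀ > 0`, for all `ε, ν > 0`:
`r_Φ(ε; ν) = sup{ ‖f‖²_{L²} : ‖f‖_H² ≤ ν², ‖Φf‖₂² ≤ ε² } ≤ 2c₀ ε² + 2ν² N_m(Φ)`,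
i.e. every such `f` satisfies `‖f‖²_{L²} ≤ 2c₀ ε² + 2ν² N_m(Φ)`. -/
theorem sampled_fpca_residual_bound
    {H : Type*} [NormedAddCommGroup H] [InnerProductSpace ℝ H]
    {L : Type*} [NormedAddCommGroup L] [InnerProductSpace ℝ L]
    (ι : H →L[ℝ] L) (hι : Function.Injective ι)
    {m : ℕ} (φ : Fin m → H) (hφ : LinearIndependent ℝ φ)
    (K Θ : Matrix (Fin m) (Fin m) ℝ)
    (hK : ∀ i j, K i j = ⟪φ i, φ j⟫)
    (hΘ : ∀ i j, Θ i j = ⟪ι (φ i), ι (φ j)⟫)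
    (hKpd : K.PosDef)
    (c₀ : ℝ) (hc₀ : 0 < c₀)
    (hB1 : (c₀ • (K * K) - Θ).PosSemidef) :
    ∀ ε ν : ℝ, 0 < ε → 0 < ν →
      ∀ f : H, ‖f‖^2 ≤ ν^2 → (∑ j, (⟪φ j, f⟫ : ℝ)^2) ≤ ε^2 →
        ‖ι f‖^2 ≤ 2 * c₀ * ε^2 +
          2 * ν^2 * sSup { x : ℝ | ∃ g : H, (∀ j, (⟪φ j, g⟫ : ℝ) = 0) ∧ ‖g‖ ≤ 1 ∧
            x = ‖ι g‖^2 } := by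
  intro ε ν hε hν f hfH hfΦ
  set T : Set ℝ := { x : ℝ | ∃ g : H, (∀ j, (⟪φ j, g⟫ : ℝ) = 0) ∧ ‖g‖ ≤ 1 ∧
            x = ‖ι g‖^2 } with hT
  set N : ℝ := sSup T with hN
  have hTne : (0 : ℝ) ∈ T := ⟨0, fun j => inner_zero_right _, by simp, by simp⟩
  have hTbdd : BddAbove T := by
    refine ⟨‖ι‖^2, fun x hx => ?_⟩
    obtain ⟨g, -, hg1, rfl⟩ := hx
    have h1 : ‖ι g‖ ≤ ‖ι‖ * ‖g‖ := ι.le_opNorm g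
    have h2 : ‖ι‖ * ‖g‖ ≤ ‖ι‖ * 1 := by
      exact mul_le_mul_of_nonneg_left hg1 (norm_nonneg _)
    nlinarith [norm_nonneg (ι g), norm_nonneg ι]
  have hN0 : 0 ≤ N := le_csSup hTbdd hTne
  -- decompose f
  set S : Submodule ℝ H := Submodule.span ℝ (Set.range φ) with hS
  haveI : FiniteDimensional ℝ S := FiniteDimensional.span_of_finite ℝ (Set.finite_range φ)
  set p : H := (S.orthogonalProjectionOnto f : H) with hp
  set q : H := f - p with hq
  have hfpq : f = p + q := by simp [hq]
  have hpS : p ∈ S := (S.orthogonalProjectionOnto f).2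
  have hqS : q ∈ Sᗮ := Submodule.sub_starProjection_mem_orthogonal (K := S) f
  have hqφ : ∀ j, (⟪φ j, q⟫ : ℝ) = 0 := fun j =>
    hqS (φ j) (Submodule.subset_span (Set.mem_range_self j))
  have hpq : (⟪p, q⟫ : ℝ) = 0 :=
    Submodule.inner_right_of_mem_orthogonal hpS hqS
  -- ‖q‖² ≤ ν²
  have hnormsplit : ‖f‖^2 = ‖p‖^2 + ‖q‖^2 := by
    rw [hfpq, @norm_add_sq_real, hpq]; ring
  have hqν : ‖q‖^2 ≤ ν^2 := by nlinarith [sq_nonneg ‖p‖]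
  -- bound ‖ι q‖² ≤ ν² * N
  have hιq : ‖ι q‖^2 ≤ ν^2 * N := by
    rcases eq_or_ne q 0 with h0 | h0
    · simp [h0]; positivity
    · have hqn : 0 < ‖q‖ := norm_pos_iff.2 h0
      have hmem : ‖ι ((‖q‖⁻¹ : ℝ) • q)‖^2 ∈ T := by
        refine ⟨(‖q‖⁻¹ : ℝ) • q, fun j => ?_, ?_, rfl⟩
        · rw [real_inner_smul_right, hqφ]; ring
        · rw [norm_smul]; simp [abs_of_pos (inv_pos.2 hqn)]
          rw [inv_mul_cancel₀ hqn.ne']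
      have hle : ‖ι ((‖q‖⁻¹ : ℝ) • q)‖^2 ≤ N := le_csSup hTbdd hmem
      have heq : ‖ι ((‖q‖⁻¹ : ℝ) • q)‖^2 = ‖q‖⁻¹^2 * ‖ι q‖^2 := by
        rw [_root_.map_smul, norm_smul]
        simp [abs_of_pos (inv_pos.2 hqn)]; ring
      have : ‖ι q‖^2 ≤ ‖q‖^2 * N := by
        rw [heq] at hle
        have := mul_le_mul_of_nonneg_left hle (le_of_lt (pow_pos hqn 2))
        calc ‖ι q‖^2 = ‖q‖^2 * (‖q‖⁻¹^2 * ‖ι q‖^2) := by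
              field_simp
          _ ≤ ‖q‖^2 * N := this
      calc ‖ι q‖^2 ≤ ‖q‖^2 * N := this
        _ ≤ ν^2 * N := mul_le_mul_of_nonneg_right hqν hN0
  -- bound ‖ι p‖² ≤ c₀ ε²
  obtain ⟨a, ha⟩ := (Submodule.mem_span_range_iff_exists_fun ℝ).1 hpS
  have hKa : ∀ j, K.mulVec a j = ⟪φ j, f⟫ := by
    intro j
    have : (⟪φ j, f⟫ : ℝ) = ⟪φ j, p⟫ := by
      rw [hfpq, inner_add_right, hqφ, add_zero]
    rw [this, ← ha, inner_sum]
    simp only [real_inner_smul_right]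
    simp [Matrix.mulVec, dotProduct, hK, mul_comm]
  have hιp2 : ‖ι p‖^2 = a ⬝ᵥ Θ.mulVec a := by
    rw [← @real_inner_self_eq_norm_sq, ← ha]
    rw [map_sum]
    rw [sum_inner]
    simp only [_root_.map_smul, real_inner_smul_left, inner_sum, real_inner_smul_right]
    simp [dotProduct, Matrix.mulVec, hΘ, Finset.mul_sum, mul_comm, mul_left_comm]
  have hpsd := hB1.dotProduct_mulVec_nonneg a
  have hexpand : a ⬝ᵥ (c₀ • (K * K) - Θ).mulVec a
      = c₀ * (K.mulVec a ⬝ᵥ K.mulVec a) - a ⬝ᵥ Θ.mulVec a := by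
    rw [Matrix.sub_mulVec, dotProduct_sub, Matrix.smul_mulVec, dotProduct_smul,
      ← Matrix.mulVec_mulVec, Matrix.dotProduct_mulVec a K]
    have hKsymm : K.transpose = K := by
      ext i j; simp [Matrix.transpose_apply, hK, real_inner_comm]
    rw [show K.vecMul a = K.transpose.mulVec a from (Matrix.mulVec_transpose K a).symm, hKsymm]
    simp [smul_eq_mul]
  have hpsd' : a ⬝ᵥ Θ.mulVec a ≤ c₀ * (K.mulVec a ⬝ᵥ K.mulVec a) := by
    have : (0:ℝ) ≤ a ⬝ᵥ (c₀ • (K * K) - Θ).mulVec a := by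
      simpa using hpsd
    rw [hexpand] at this; linarith
  have hKaε : K.mulVec a ⬝ᵥ K.mulVec a ≤ ε^2 := by
    have : K.mulVec a ⬝ᵥ K.mulVec a = ∑ j, (⟪φ j, f⟫ : ℝ)^2 := by
      simp [dotProduct, hKa, sq]
    rw [this]; exact hfΦ
  have hιpε : ‖ι p‖^2 ≤ c₀ * ε^2 := by
    rw [hιp2]
    calc a ⬝ᵥ Θ.mulVec a ≤ c₀ * (K.mulVec a ⬝ᵥ K.mulVec a) := hpsd'
      _ ≤ c₀ * ε^2 := mul_le_mul_of_nonneg_left hKaε hc₀.le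
  -- combine
  have hfinal : ‖ι f‖^2 ≤ 2 * ‖ι p‖^2 + 2 * ‖ι q‖^2 := by
    have h1 : ‖ι f‖ ≤ ‖ι p‖ + ‖ι q‖ := by
      rw [hfpq, map_add]; exact norm_add_le _ _
    nlinarith [norm_nonneg (ι f), norm_nonneg (ι p), norm_nonneg (ι q), sq_nonneg (‖ι p‖ - ‖ι q‖)]
  calc ‖ι f‖^2 ≤ 2 * ‖ι p‖^2 + 2 * ‖ι q‖^2 := hfinal
    _ ≤ 2 * (c₀ * ε^2) + 2 * (ν^2 * N) := by linarith
    _ = 2 * c₀ * ε^2 + 2 * ν^2 * N := by ring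
end
end

section
/- Under the spiked functional model with conditions (A1)–(A4) (κ sufficiently small), there exist universal constants C, c₃ > 0 such that σ_m² Σ_{j=1}^r n⁻¹‖W ê_j‖₂² ≤ C κ { ‖Ê‖²_HS + ε_{m,n}² } with probability at least 1 − c₃ exp( −κ² r⁻² n ε_{m,n}²/(2σ_m²) ). -/
open scoped RealInnerProductSpace BigOperators ENNReal
open MeasureTheory ProbabilityTheory Matrix

noncomputable section

/-- Squared Frobenius (Hilbert–Schmidt) norm of a matrix. -/
def sqFrob {m r : ℕ} (A : Matrix (Fin m) (Fin r) ℝ) : ℝ := ∑ i, ∑ j, (A i j)^2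

private lemma gauss_pdf_mul (t x : ℝ) :
    Real.exp (t * x) * gaussianPDFReal 0 1 x
      = Real.exp (t ^ 2 / 2) * gaussianPDFReal t 1 x := by
  unfold gaussianPDFReal
  rw [mul_left_comm, mul_left_comm (Real.exp (t ^ 2 / 2)), ← Real.exp_add, ← Real.exp_add]
  congr 2
  push_cast
  ring

private lemma gaussian_exp_int (t : ℝ) :
    Integrable (fun x => Real.exp (t * x)) (gaussianReal 0 1) ∧
      ∫ x, Real.exp (t * x) ∂(gaussianReal 0 1) = Real.exp (t ^ 2 / 2) := by
  have h1 : (1 : NNReal) ≠ 0 := one_ne_zero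
  have hrw : gaussianReal 0 1 = volume.withDensity
      (fun x => ((Real.toNNReal (gaussianPDFReal 0 1 x)) : ℝ≥0∞)) := by
    rw [gaussianReal_of_var_ne_zero _ h1]; rfl
  have hfm : Measurable fun x => Real.toNNReal (gaussianPDFReal 0 1 x) :=
    (measurable_gaussianPDFReal 0 1).real_toNNReal
  have hkey : (fun x => Real.toNNReal (gaussianPDFReal 0 1 x) • Real.exp (t * x))
      = fun x => Real.exp (t ^ 2 / 2) * gaussianPDFReal t 1 x := by
    funext x
    rw [NNReal.smul_def, smul_eq_mul, Real.coe_toNNReal _ (gaussianPDFReal_nonneg 0 1 x),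
      mul_comm, gauss_pdf_mul]
  constructor
  · rw [hrw, integrable_withDensity_iff_integrable_smul hfm]
    rw [hkey]
    exact (integrable_gaussianPDFReal t 1).const_mul _
  · rw [hrw, integral_withDensity_eq_integral_smul hfm]
    rw [hkey, integral_const_mul, integral_gaussianPDFReal_eq_one t h1, mul_one]

private lemma mgf_gauss {Ω : Type*} [MeasurableSpace Ω] {P : Measure Ω} {X : Ω → ℝ}
    (hX : Measurable X) (hmap : Measure.map X P = gaussianReal 0 1) (t : ℝ) :
    Integrable (fun ω => Real.exp (t * X ω)) P ∧ mgf X P t = Real.exp (t ^ 2 / 2) := by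
  have hint := (gaussian_exp_int t).1
  have hval := (gaussian_exp_int t).2
  rw [← hmap] at hint hval
  have hsm : AEStronglyMeasurable (fun x : ℝ => Real.exp (t * x)) (Measure.map X P) :=
    (Real.continuous_exp.comp (continuous_const.mul continuous_id)).aestronglyMeasurable
  have hi : Integrable (fun ω => Real.exp (t * X ω)) P :=
    (integrable_map_measure hsm hX.aemeasurable).mp hint
  refine ⟨hi, ?_⟩
  rw [mgf, ← integral_map hX.aemeasurable hsm]
  exact hval

private lemma chernoff_gauss {Ω : Type*} [MeasurableSpace Ω] {P : Measure Ω}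
    [IsProbabilityMeasure P] {ι : Type*} [Fintype ι] {X : ι → Ω → ℝ}
    (hmeas : ∀ i, Measurable (X i))
    (hmap : ∀ i, Measure.map (X i) P = gaussianReal 0 1)
    (hindep : iIndepFun X P)
    (c : ι → ℝ) (hc : ∑ i, c i ^ 2 ≤ 1) {t : ℝ} (ht : 0 ≤ t) :
    P {ω | t ≤ ∑ i, c i * X i ω} ≤ ENNReal.ofReal (Real.exp (-(t ^ 2) / 2)) := by
  classical
  set Y : ι → Ω → ℝ := fun i ω => c i * X i ω with hY
  have hYmeas : ∀ i, Measurable (Y i) := fun i => (hmeas i).const_mul _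
  have hYindep : iIndepFun Y P := by
    have h := hindep.comp (fun i (x : ℝ) => c i * x) (fun i => measurable_const_mul _)
    exact h
  have hYint : ∀ i, Integrable (fun ω => Real.exp (t * Y i ω)) P := by
    intro i
    have h := (mgf_gauss (hmeas i) (hmap i) (t * c i)).1
    simpa only [mul_assoc] using h
  have hYmgf : ∀ i, mgf (Y i) P t = Real.exp ((t * c i) ^ 2 / 2) := by
    intro i
    have h := (mgf_gauss (hmeas i) (hmap i) (t * c i)).2
    rw [← h]
    simp only [mgf, hY, mul_assoc]
  have hSmgf : mgf (∑ i, Y i) P t = Real.exp (∑ i, (t * c i) ^ 2 / 2) := by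
    rw [hYindep.mgf_sum hYmeas, Real.exp_sum]
    exact Finset.prod_congr rfl fun i _ => hYmgf i
  have hSint : Integrable (fun ω => Real.exp (t * (∑ i, Y i) ω)) P :=
    hYindep.integrable_exp_mul_sum hYmeas (fun i _ => hYint i)
  have hcher := measure_ge_le_exp_mul_mgf (μ := P) (X := ∑ i, Y i) (t := t) t ht hSint
  have hset : {ω | t ≤ ∑ i, c i * X i ω} = {ω | t ≤ (∑ i, Y i) ω} := by
    ext ω; simp [hY, Finset.sum_apply]
  rw [hset]
  have hexp : Real.exp (-t * t) * mgf (∑ i, Y i) P t ≤ Real.exp (-(t ^ 2) / 2) := by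
    rw [hSmgf, ← Real.exp_add, Real.exp_le_exp]
    have h1 : ∑ i, (t * c i) ^ 2 / 2 ≤ t ^ 2 / 2 := by
      have : ∑ i, (t * c i) ^ 2 / 2 = (t ^ 2 / 2) * ∑ i, c i ^ 2 := by
        rw [Finset.mul_sum]; exact Finset.sum_congr rfl fun i _ => by ring
      rw [this]
      nlinarith [sq_nonneg t, Finset.sum_nonneg (fun i (_ : i ∈ Finset.univ) => sq_nonneg (c i))]
    nlinarith
  refine (ENNReal.le_ofReal_iff_toReal_le (measure_ne_top _ _) (Real.exp_pos _).le).mpr ?_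
  exact le_trans hcher hexp

private lemma exists_net (d : ℕ) (hd : 0 < d) :
    ∃ N : Finset (EuclideanSpace ℝ (Fin d)),
      (∀ u ∈ N, ‖u‖ = 1) ∧ ((N.card : ℝ) ≤ 8 ^ d) ∧
      (∀ x : EuclideanSpace ℝ (Fin d), ‖x‖ = 1 → ∃ u ∈ N, ‖x - u‖ ≤ 1 / 2) := by
  classical
  set E := EuclideanSpace ℝ (Fin d)
  set S : Set E := Metric.sphere 0 1 with hS
  set A : Set (Set E) := {M | M ⊆ S ∧ M.Pairwise fun a b => 1 / 2 ≤ dist a b} with hA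
  obtain ⟨M, hM⟩ := zorn_subset A (by
    intro c hcA hchain
    refine ⟨⋃₀ c, ⟨Set.sUnion_subset fun s hs => (hcA hs).1, ?_⟩,
      fun s hs => Set.subset_sUnion_of_mem hs⟩
    intro a ha b hb hab
    obtain ⟨sa, hsa, has⟩ := ha
    obtain ⟨sb, hsb, hbs⟩ := hb
    rcases hchain.total hsa hsb with h | h
    · exact (hcA hsb).2 (h has) hbs hab
    · exact (hcA hsa).2 has (h hbs) hab)
  have hMA : M ∈ A := hM.1
  have key : ∀ F : Finset E, ↑F ⊆ M → (F.card : ℝ) ≤ 8 ^ d := by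
    intro F hF
    have hball : ∀ a ∈ F, Metric.ball (a : E) (1 / 4) ⊆ Metric.ball (0 : E) 2 := by
      intro a haF z hz
      have ha1 : dist a (0 : E) = 1 := by
        have h := hMA.1 (hF haF)
        rw [hS] at h
        exact Metric.mem_sphere.mp h
      have hza : dist z a < 1 / 4 := Metric.mem_ball.mp hz
      have : dist z (0 : E) < 2 := by
        calc dist z (0 : E) ≤ dist z a + dist a 0 := dist_triangle _ _ _
        _ < 2 := by rw [ha1]; linarith
      exact Metric.mem_ball.mpr this
    have hdisj : (F : Set E).PairwiseDisjoint fun a => Metric.ball a (1 / 4) := by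
      intro a ha b hb hab
      have hsep : 1 / 2 ≤ dist a b := hMA.2 (hF ha) (hF hb) hab
      exact Metric.ball_disjoint_ball (by linarith)
    have hsum : ∑ a ∈ F, volume (Metric.ball (a : E) (1 / 4)) ≤ volume (Metric.ball (0 : E) 2) := by
      rw [← measure_biUnion_finset hdisj fun a _ => measurableSet_ball]
      exact measure_mono (Set.iUnion₂_subset hball)
    have hfr : Module.finrank ℝ E = d := finrank_euclideanSpace_fin
    have hvol1 : ∀ a : E, volume (Metric.ball a (1 / 4))
        = ENNReal.ofReal ((1 / 4 : ℝ) ^ d) * volume (Metric.ball (0 : E) 1) := by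
      intro a
      rw [Measure.addHaar_ball_of_pos volume a (by norm_num : (0:ℝ) < 1 / 4), hfr]
    have hvol2 : volume (Metric.ball (0 : E) 2)
        = ENNReal.ofReal ((2 : ℝ) ^ d) * volume (Metric.ball (0 : E) 1) := by
      rw [Measure.addHaar_ball_of_pos volume _ (by norm_num : (0:ℝ) < 2), hfr]
    set v := volume (Metric.ball (0 : E) 1) with hv
    have hv0 : v ≠ 0 := (Metric.measure_ball_pos volume 0 one_pos).ne'
    have hvt : v ≠ ⊤ := measure_ball_lt_top.ne
    have hcard : (F.card : ℝ≥0∞) * ENNReal.ofReal ((1 / 4 : ℝ) ^ d) * v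
        ≤ ENNReal.ofReal ((2 : ℝ) ^ d) * v := by
      calc (F.card : ℝ≥0∞) * ENNReal.ofReal ((1 / 4 : ℝ) ^ d) * v
          = ∑ a ∈ F, volume (Metric.ball (a : E) (1 / 4)) := by
            rw [Finset.sum_congr rfl fun a _ => hvol1 a, Finset.sum_const, nsmul_eq_mul, mul_assoc]
      _ ≤ _ := hsum.trans_eq hvol2
    have hcard2 : (F.card : ℝ≥0∞) * ENNReal.ofReal ((1 / 4 : ℝ) ^ d)
        ≤ ENNReal.ofReal ((2 : ℝ) ^ d) :=
      (ENNReal.mul_le_mul_iff_left hv0 hvt).mp hcard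
    have hcard3 : ENNReal.ofReal ((F.card : ℝ) * (1 / 4 : ℝ) ^ d)
        ≤ ENNReal.ofReal ((2 : ℝ) ^ d) := by
      rwa [ENNReal.ofReal_mul (by positivity), ENNReal.ofReal_natCast]
    have hcard4 : (F.card : ℝ) * (1 / 4 : ℝ) ^ d ≤ (2 : ℝ) ^ d :=
      (ENNReal.ofReal_le_ofReal_iff (by positivity)).mp hcard3
    have h4 : (0:ℝ) < (1 / 4 : ℝ) ^ d := by positivity
    calc (F.card : ℝ) = (F.card : ℝ) * (1 / 4 : ℝ) ^ d * (4 : ℝ) ^ d := by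
          rw [mul_assoc, ← mul_pow]; norm_num
    _ ≤ (2 : ℝ) ^ d * 4 ^ d := by
          have : (0:ℝ) ≤ (4:ℝ) ^ d := by positivity
          nlinarith
    _ = 8 ^ d := by rw [← mul_pow]; norm_num
  have hMfin : M.Finite := by
    by_contra hinf
    obtain ⟨F, hFM, hFcard⟩ := Set.Infinite.exists_subset_card_eq hinf (8 ^ d + 1)
    have h := key F hFM
    rw [hFcard] at h
    push_cast at h
    linarith
  refine ⟨hMfin.toFinset, ?_, ?_, ?_⟩
  · intro u hu
    have h := hMA.1 (hMfin.mem_toFinset.mp hu)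
    rw [hS] at h
    exact mem_sphere_zero_iff_norm.mp h
  · exact key _ (by simp)
  · intro x hx
    by_contra hcon
    push_neg at hcon
    have hxM : x ∉ M := by
      intro hxM
      have h := hcon x (hMfin.mem_toFinset.mpr hxM)
      rw [sub_self, norm_zero] at h
      linarith
    have hins : insert x M ∈ A := by
      constructor
      · refine Set.insert_subset ?_ hMA.1
        rw [hS]
        exact mem_sphere_zero_iff_norm.mpr hx
      · rw [@Set.pairwise_insert_of_symm _ (fun a b => 1 / 2 ≤ dist a b) _ _ ⟨fun a b h => by rwa [dist_comm]⟩]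
        refine ⟨hMA.2, fun b hb hxb => ?_⟩
        have := hcon b (hMfin.mem_toFinset.mpr hb)
        rw [← dist_eq_norm] at this
        linarith
    have : x ∈ M := hM.2 hins (Set.subset_insert x M) (Set.mem_insert x M)
    exact hxM this

private lemma opnorm_of_net {n m : ℕ} (hm : 0 < m)
    (Nn : Finset (EuclideanSpace ℝ (Fin n))) (Nm : Finset (EuclideanSpace ℝ (Fin m)))
    (hNnnet : ∀ x : EuclideanSpace ℝ (Fin n), ‖x‖ = 1 → ∃ u ∈ Nn, ‖x - u‖ ≤ 1 / 2)
    (hNmnet : ∀ x : EuclideanSpace ℝ (Fin m), ‖x‖ = 1 → ∃ u ∈ Nm, ‖x - u‖ ≤ 1 / 2)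
    (A : Matrix (Fin n) (Fin m) ℝ) {t : ℝ} (ht : 0 ≤ t)
    (hA : ∀ u ∈ Nn, ∀ v ∈ Nm, ⟪u, Matrix.toEuclideanLin A v⟫ ≤ t) :
    ∀ x : EuclideanSpace ℝ (Fin m), ‖Matrix.toEuclideanLin A x‖ ≤ 4 * t * ‖x‖ := by
  set f := Matrix.toEuclideanLin A with hf
  have hB : ∀ v ∈ Nm, ‖f v‖ ≤ 2 * t := by
    intro v hv
    rcases eq_or_ne (f v) 0 with h0 | h0
    · rw [h0, norm_zero]; linarith
    · set y := f v with hy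
      have hy0 : 0 < ‖y‖ := norm_pos_iff.mpr h0
      obtain ⟨u, hu, hclose⟩ := hNnnet (‖y‖⁻¹ • y)
        (by rw [norm_smul, norm_inv, norm_norm, inv_mul_cancel₀ hy0.ne'])
      have h1 : ⟪(‖y‖⁻¹ • y : EuclideanSpace ℝ (Fin n)), y⟫ = ‖y‖ := by
        rw [real_inner_smul_left, real_inner_self_eq_norm_sq]
        field_simp
      have h2 : |⟪(‖y‖⁻¹ • y : EuclideanSpace ℝ (Fin n)) - u, y⟫| ≤ 1 / 2 * ‖y‖ := by
        calc |⟪(‖y‖⁻¹ • y : EuclideanSpace ℝ (Fin n)) - u, y⟫| ≤ ‖‖y‖⁻¹ • y - u‖ * ‖y‖ :=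
              abs_real_inner_le_norm _ _
        _ ≤ 1 / 2 * ‖y‖ := mul_le_mul_of_nonneg_right hclose hy0.le
      have h3 : ⟪u, y⟫ ≤ t := hA u hu v hv
      have h4 : ⟪u, y⟫ = ‖y‖ - ⟪(‖y‖⁻¹ • y : EuclideanSpace ℝ (Fin n)) - u, y⟫ := by
        rw [inner_sub_left, h1]; ring
      have h5 := le_abs_self (⟪(‖y‖⁻¹ • y : EuclideanSpace ℝ (Fin n)) - u, y⟫)
      linarith
  have hsne : (Metric.sphere (0 : EuclideanSpace ℝ (Fin m)) 1).Nonempty := by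
    refine ⟨EuclideanSpace.single ⟨0, hm⟩ (1 : ℝ), ?_⟩
    rw [mem_sphere_zero_iff_norm, EuclideanSpace.norm_single]
    norm_num
  have hcont : Continuous fun x : EuclideanSpace ℝ (Fin m) => ‖f x‖ :=
    f.continuous_of_finiteDimensional.norm
  obtain ⟨xs, hxs, hmax⟩ := (isCompact_sphere (0 : EuclideanSpace ℝ (Fin m)) 1).exists_isMaxOn
    hsne hcont.continuousOn
  set Mv := ‖f xs‖ with hMvdef
  have hMv0 : 0 ≤ Mv := norm_nonneg _
  have hhom : ∀ z : EuclideanSpace ℝ (Fin m), ‖f z‖ ≤ Mv * ‖z‖ := by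
    intro z
    rcases eq_or_ne z 0 with rfl | hz
    · simp
    · have hz0 : 0 < ‖z‖ := norm_pos_iff.mpr hz
      have hmem : (‖z‖⁻¹ • z) ∈ Metric.sphere (0 : EuclideanSpace ℝ (Fin m)) 1 := by
        rw [mem_sphere_zero_iff_norm, norm_smul, norm_inv, norm_norm, inv_mul_cancel₀ hz0.ne']
      have h : ‖f (‖z‖⁻¹ • z)‖ ≤ Mv := hmax hmem
      rw [LinearMap.map_smul, norm_smul, norm_inv, norm_norm] at h
      calc ‖f z‖ = ‖z‖ * (‖z‖⁻¹ * ‖f z‖) := by field_simp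
      _ ≤ ‖z‖ * Mv := mul_le_mul_of_nonneg_left h hz0.le
      _ = Mv * ‖z‖ := mul_comm _ _
  have hMvle : Mv ≤ 4 * t := by
    obtain ⟨v, hv, hclose⟩ := hNmnet xs (mem_sphere_zero_iff_norm.mp hxs)
    have h1 : ‖f xs‖ ≤ ‖f v‖ + ‖f (xs - v)‖ := by
      have hxsv : xs = v + (xs - v) := by abel
      calc ‖f xs‖ = ‖f v + f (xs - v)‖ := by rw [← map_add, ← hxsv]
      _ ≤ _ := norm_add_le _ _
    have h2 := hB v hv
    have h3 : ‖f (xs - v)‖ ≤ Mv * ‖xs - v‖ := hhom _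
    have h4 : ‖xs - v‖ ≤ 1 / 2 := hclose
    have h5 : Mv * ‖xs - v‖ ≤ Mv * (1 / 2) := mul_le_mul_of_nonneg_left h4 hMv0
    rw [← hMvdef] at h1
    linarith
  intro x
  calc ‖f x‖ ≤ Mv * ‖x‖ := hhom x
  _ ≤ 4 * t * ‖x‖ := mul_le_mul_of_nonneg_right hMvle (norm_nonneg x)


set_option maxHeartbeats 2000000 in
/-- Lemma 11 of the paper: bounding the quadratic term `T₂`.
Under the spiked functional model with conditions (A1)–(A4) (`κ ≤ κ₀` sufficiently small),
there are universal constants `C, c₃ > 0` such that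
`σ_m² Σⱼ n⁻¹ ‖W êⱼ‖₂² ≤ C κ {‖Ê‖²_HS + ε²}` with probability at least
`1 − c₃ exp(−κ²r⁻²nε²/(2σ_m²))`. -/
theorem sampled_fpca_term_two_bound :
    ∃ κ₀ C c₃ : ℝ, 0 < κ₀ ∧ 0 < C ∧ 0 < c₃ ∧
    ∀ (m n r : ℕ), 0 < m → 0 < n → 0 < r →
    ∀ (H : Type) [inst : NormedAddCommGroup H] [inst2 : InnerProductSpace ℝ H]
      (L : Type) [instL : NormedAddCommGroup L] [instL2 : InnerProductSpace ℝ L]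
      (ι : H →L[ℝ] L),
    Function.Injective ι →
    ∀ (φ : Fin m → H), LinearIndependent ℝ φ →
    ∀ (K : Matrix (Fin m) (Fin m) ℝ), (∀ i j, K i j = ⟪φ i, φ j⟫) →
    ∀ (hHerm : K.IsHermitian) (μhat : Fin m → ℝ),
      (∃ g : Fin m ≃ Fin m, ∀ i, μhat i = hHerm.eigenvalues (g i)) →
      Antitone μhat →
    ∀ (ρ : ℝ), 0 < ρ →
    ∀ (fstar : Fin r → H),
      Orthonormal ℝ (fun j => ι (fstar j)) →
      (∀ j, ‖fstar j‖ ≤ ρ) →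
    ∀ (s : Fin r → ℝ), Antitone s → (∀ j, 0 < s j) →
      (∀ h0 : 0 < r, s ⟨0, h0⟩ = 1) →
    ∀ (σm σ₀ κ : ℝ), 0 < σm → σm ≤ σ₀ → 0 < κ → κ ≤ κ₀ →
    -- condition (A1)
    (∀ j, 1/2 ≤ (s j)^2) → σ₀^2 ≤ κ →
    ∀ (zstar : Fin r → Fin m → ℝ), (∀ j k, zstar j k = ⟪φ k, fstar j⟫) →
    -- condition (A2)
    (∀ i j, |zstar i ⬝ᵥ zstar j - (if i = j then (1:ℝ) else 0)| ≤ 1 / (2*r)) →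
    ∀ (F : ℝ → ℝ), (∀ t, F t = Real.sqrt (∑ j, min (t^2) (r * ρ^2 * μhat j))) →
    -- condition (A3)
    (∀ t : ℝ, 0 < t → σm / Real.sqrt n * F t ≤ Real.sqrt κ * t) →
    -- condition (A4)
    ((r:ℝ) ≤ (m:ℝ)/2 ∧ (r:ℝ) ≤ (n:ℝ)/4 ∧ (r:ℝ) ≤ κ * Real.sqrt n / σm) →
    ∀ (Ω : Type) [instΩ : MeasurableSpace Ω] (P : Measure Ω) [instP : IsProbabilityMeasure P]
      (β : Fin n → Fin r → Ω → ℝ) (w : Fin n → Fin m → Ω → ℝ),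
      (∀ i j, Measurable (β i j)) → (∀ i k, Measurable (w i k)) →
      (∀ i j, Measure.map (β i j) P = gaussianReal 0 1) →
      (∀ i k, Measure.map (w i k) P = gaussianReal 0 1) →
      iIndepFun
        (Sum.elim (fun q : Fin n × Fin r => β q.1 q.2)
          (fun q : Fin n × Fin m => w q.1 q.2)) P →
    ∀ (y : Fin n → Ω → Fin m → ℝ),
      (∀ i ω k, y i ω k = (∑ j, s j * β i j ω * ⟪φ k, fstar j⟫) + σm * w i k ω) →
    ∀ (Sig : Ω → Matrix (Fin m) (Fin m) ℝ),
      (∀ ω a b, Sig ω a b = (∑ i, y i ω a * y i ω b) / n) →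
    ∀ (Zhat : Ω → Matrix (Fin m) (Fin r) ℝ),
      (∀ ω, (Zhat ω)ᵀ * Zhat ω = 1 ∧
        Matrix.trace (K⁻¹ * (Zhat ω * (Zhat ω)ᵀ)) ≤ 2*r*ρ^2) →
      (∀ ω (Z : Matrix (Fin m) (Fin r) ℝ), Zᵀ * Z = 1 →
        Matrix.trace (K⁻¹ * (Z * Zᵀ)) ≤ 2*r*ρ^2 →
        Matrix.trace (Sig ω * (Z * Zᵀ)) ≤ Matrix.trace (Sig ω * (Zhat ω * (Zhat ω)ᵀ))) →
    -- Z̃*: orthonormal feasible version of Z*, properly aligned with Ẑ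
    ∀ (Zs : Matrix (Fin m) (Fin r) ℝ), (∀ k j, Zs k j = zstar j k) →
    ∀ (Ztil : Matrix (Fin m) (Fin r) ℝ),
      Ztilᵀ * Ztil = 1 →
      LinearMap.range Ztil.mulVecLin = LinearMap.range Zs.mulVecLin →
      Matrix.trace (K⁻¹ * (Ztil * Ztilᵀ)) ≤ 2*r*ρ^2 →
      (∀ ω, ∃ (Q : Matrix (Fin m) (Fin m) ℝ) (chat shat : Fin r → ℝ),
        Qᵀ * Q = 1 ∧
        (∀ j, chat j ∈ Set.Icc (0:ℝ) 1) ∧ (∀ j, shat j ∈ Set.Icc (0:ℝ) 1) ∧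
        Antitone shat ∧ (∀ j, (chat j)^2 + (shat j)^2 = 1) ∧
        (∀ i j, (Qᵀ * Ztil) i j = if (i : ℕ) = (j : ℕ) then 1 else 0) ∧
        (∀ i j, (Qᵀ * Zhat ω) i j =
          if (i : ℕ) = (j : ℕ) then chat j
          else if (i : ℕ) = (j : ℕ) + r then shat j else 0)) →
    ∀ (W : Ω → Matrix (Fin n) (Fin m) ℝ), (∀ ω i k, W ω i k = w i k ω) →
    ∀ (B : Ω → Matrix (Fin n) (Fin r) ℝ), (∀ ω i j, B ω i j = β i j ω) →
    ∀ (Wbar : Ω → Matrix (Fin m) (Fin r) ℝ),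
      (∀ ω, Wbar ω = (n:ℝ)⁻¹ • ((W ω)ᵀ * B ω)) →
    ∀ (Ehat : Ω → Matrix (Fin m) (Fin r) ℝ), (∀ ω, Ehat ω = Zhat ω - Ztil) →
    ∀ (εmn : ℝ),
      IsLeast {e : ℝ | 0 < e ∧
        σm / Real.sqrt n * Real.sqrt ((r:ℝ)^3) * F e ≤ κ * e^2} εmn →
    ENNReal.ofReal (1 - c₃ *
        Real.exp (-κ^2 * ((r:ℝ)^2)⁻¹ * n * εmn^2 / (2 * σm^2))) ≤
      P {ω | σm^2 * (∑ j : Fin r, (n:ℝ)⁻¹ *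
          ((W ω *ᵥ (fun a => Ehat ω a j)) ⬝ᵥ (W ω *ᵥ (fun a => Ehat ω a j)))) ≤
        C * κ * (sqFrob (Ehat ω) + εmn^2)} := by
  classical
  refine ⟨1, 300, 1, one_pos, by norm_num, one_pos, ?_⟩
  intro m n r hm hn hr H instH instH2 L instL instL2 ι hι φ hφ K hK hHerm μhat hμeig hμanti
    ρ hρ fstar horth hfnorm s hsanti hspos hs0 σm σ₀ κ hσm hσ0 hκpos hκκ0 hA1s hσ0κ
    zstar hzstar hA2 F hF hA3 hA4 Ω instΩ P instP β w hβmeas hwmeas hβmap hwmap hindep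
    y hy Sig hSig Zhat hZhat hZopt Zs hZs Ztil hZtil1 hZtilr hZtiltr hCS W hW B hB
    Wbar hWbar Ehat hEhat εmn hεmn
  -- basic facts
  have hrR : (1:ℝ) ≤ (r:ℝ) := by exact_mod_cast hr
  have hrRpos : (0:ℝ) < (r:ℝ) := lt_of_lt_of_le one_pos hrR
  have hnR : (0:ℝ) < (n:ℝ) := by exact_mod_cast hn
  have hmR : (0:ℝ) < (m:ℝ) := by exact_mod_cast hm
  have hσ2 : (0:ℝ) < σm ^ 2 := by positivity
  have hσκ : σm ^ 2 ≤ κ := by nlinarith only [hσ0, hσ0κ, hσm]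
  have hε : 0 < εmn := hεmn.1.1
  -- K is positive definite, so the μhat are positive
  have hKpd : K.PosDef := by
    refine Matrix.PosDef.of_dotProduct_mulVec_pos hHerm fun x hx => ?_
    have hv : (∑ i, x i • φ i) ≠ 0 := by
      intro h0
      exact hx (funext fun i => Fintype.linearIndependent_iff.mp hφ x h0 i)
    have hpos : (0:ℝ) < ⟪∑ i, x i • φ i, ∑ i, x i • φ i⟫ := by
      rw [real_inner_self_eq_norm_sq]
      exact pow_pos (norm_pos_iff.mpr hv) 2
    have hcalc : (star x) ⬝ᵥ (K *ᵥ x) = ⟪∑ i, x i • φ i, ∑ i, x i • φ i⟫ := by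
      rw [sum_inner]
      simp only [inner_sum, real_inner_smul_left, real_inner_smul_right]
      simp only [dotProduct, Matrix.mulVec, Pi.star_apply, star_trivial, hK,
        Finset.mul_sum]
      refine Finset.sum_congr rfl fun i _ => Finset.sum_congr rfl fun j _ => by ring
    rw [hcalc]
    exact hpos
  have hμpos : ∀ j, 0 < μhat j := by
    obtain ⟨g, hg⟩ := hμeig
    intro j
    rw [hg j]
    exact hKpd.eigenvalues_pos (g j)
  -- from (A3): m * σm² ≤ κ * n
  have hmκn : (m:ℝ) * σm ^ 2 ≤ κ * n := by
    obtain ⟨jm, hjmle⟩ : ∃ jm : Fin m, ∀ j, μhat jm ≤ μhat j := by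
      refine ⟨⟨m - 1, Nat.sub_lt hm Nat.one_pos⟩, fun j => hμanti ?_⟩
      exact Fin.mk_le_of_le_val (Nat.le_sub_one_of_lt j.isLt)
    set t₀ := Real.sqrt ((r:ℝ) * ρ ^ 2 * μhat jm) with ht₀def
    have hprod : (0:ℝ) < (r:ℝ) * ρ ^ 2 * μhat jm :=
      mul_pos (mul_pos hrRpos (pow_pos hρ 2)) (hμpos jm)
    have ht₀sq : t₀ ^ 2 = (r:ℝ) * ρ ^ 2 * μhat jm := Real.sq_sqrt hprod.le
    have ht₀pos : 0 < t₀ := Real.sqrt_pos.mpr hprod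
    have hFt₀ : F t₀ = t₀ * Real.sqrt m := by
      rw [hF]
      have hfix : ∀ j ∈ Finset.univ, min (t₀ ^ 2) ((r:ℝ) * ρ ^ 2 * μhat j) = t₀ ^ 2 := by
        intro j _
        refine min_eq_left ?_
        rw [ht₀sq]
        exact mul_le_mul_of_nonneg_left (hjmle j) (by positivity)
      rw [Finset.sum_congr rfl hfix, Finset.sum_const, Finset.card_univ, Fintype.card_fin,
        nsmul_eq_mul, Real.sqrt_mul (by positivity) (t₀ ^ 2), Real.sqrt_sq ht₀pos.le,
        mul_comm]
    have hA3' := hA3 t₀ ht₀pos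
    rw [hFt₀] at hA3'
    have hsn : 0 < Real.sqrt n := Real.sqrt_pos.mpr hnR
    have h1 : σm * Real.sqrt m / Real.sqrt n ≤ Real.sqrt κ := by
      have h2 : t₀ * (σm * Real.sqrt m / Real.sqrt n) ≤ t₀ * Real.sqrt κ := by
        calc t₀ * (σm * Real.sqrt m / Real.sqrt n)
            = σm / Real.sqrt n * (t₀ * Real.sqrt m) := by ring
        _ ≤ Real.sqrt κ * t₀ := hA3'
        _ = t₀ * Real.sqrt κ := mul_comm _ _
      exact le_of_mul_le_mul_left h2 ht₀pos
    have hstep : σm * Real.sqrt m ≤ Real.sqrt κ * Real.sqrt n := by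
      rwa [div_le_iff₀ hsn] at h1
    have hsq := mul_self_le_mul_self (by positivity) hstep
    have hmm := Real.mul_self_sqrt hmR.le
    have hnn := Real.mul_self_sqrt hnR.le
    have hκκ := Real.mul_self_sqrt hκpos.le
    have hL : (σm * Real.sqrt m) * (σm * Real.sqrt m) = (m:ℝ) * σm ^ 2 := by
      rw [show (σm * Real.sqrt m) * (σm * Real.sqrt m)
          = (Real.sqrt m * Real.sqrt m) * σm ^ 2 by ring, hmm]
    have hR : (Real.sqrt κ * Real.sqrt n) * (Real.sqrt κ * Real.sqrt n) = κ * n := by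
      rw [show (Real.sqrt κ * Real.sqrt n) * (Real.sqrt κ * Real.sqrt n)
          = (Real.sqrt κ * Real.sqrt κ) * (Real.sqrt n * Real.sqrt n) by ring, hκκ, hnn]
    rw [hL, hR] at hsq
    exact hsq
  -- constants
  set a : ℝ := κ * n / σm ^ 2 with hadef
  have hapos : 0 < a := by positivity
  have hna : (n:ℝ) ≤ a := by
    rw [hadef, le_div_iff₀ hσ2]
    nlinarith only [mul_le_mul_of_nonneg_left hσκ hnR.le]
  have hma : (m:ℝ) ≤ a := by
    rw [hadef, le_div_iff₀ hσ2]
    linarith only [hmκn]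
  set b : ℝ := κ * εmn ^ 2 / (4 * (r:ℝ) ^ 2) with hbdef
  have hbpos : 0 < b := by positivity
  set T : ℝ := 300 * a * (1 + b) with hTdef
  have hTpos : 0 < T := by positivity
  set t : ℝ := Real.sqrt T / 4 with htdef
  have ht0 : 0 ≤ t := by positivity
  have ht16 : 16 * t ^ 2 = T := by
    rw [htdef, div_pow, Real.sq_sqrt hTpos.le]
    ring
  -- nets
  obtain ⟨Nn, hNn1, hNncard, hNnnet⟩ := exists_net n hn
  obtain ⟨Nm, hNm1, hNmcard, hNmnet⟩ := exists_net m hm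
  -- the full gaussian family
  set XX : (Fin n × Fin r) ⊕ (Fin n × Fin m) → Ω → ℝ :=
    Sum.elim (fun q : Fin n × Fin r => β q.1 q.2) (fun q : Fin n × Fin m => w q.1 q.2) with hXX
  have hXXmeas : ∀ q, Measurable (XX q) := by
    rintro (⟨i, j⟩ | ⟨i, k⟩)
    exacts [hβmeas i j, hwmeas i k]
  have hXXmap : ∀ q, Measure.map (XX q) P = gaussianReal 0 1 := by
    rintro (⟨i, j⟩ | ⟨i, k⟩)
    exacts [hβmap i j, hwmap i k]
  set cc : EuclideanSpace ℝ (Fin n) → EuclideanSpace ℝ (Fin m) →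
      ((Fin n × Fin r) ⊕ (Fin n × Fin m)) → ℝ :=
    fun u v => Sum.elim (fun _ => 0) (fun q => u q.1 * v q.2) with hcc
  set Bad : Set Ω := ⋃ u ∈ Nn, ⋃ v ∈ Nm, {ω | t ≤ ∑ q, cc u v q * XX q ω} with hBadDef
  -- coordinates of unit vectors
  have hcoords : ∀ (d : ℕ) (u : EuclideanSpace ℝ (Fin d)), ‖u‖ = 1 → ∑ i, (u i) ^ 2 = 1 := by
    intro d u hu
    have h2 : Real.sqrt (∑ i, ‖u i‖ ^ 2) = 1 := by
      rw [← EuclideanSpace.norm_eq]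
      exact hu
    have h3 := Real.sqrt_eq_one.mp h2
    simpa [Real.norm_eq_abs, sq_abs] using h3
  -- single pair tail bound
  have hpair : ∀ u ∈ Nn, ∀ v ∈ Nm,
      P {ω | t ≤ ∑ q, cc u v q * XX q ω} ≤ ENNReal.ofReal (Real.exp (-(t ^ 2) / 2)) := by
    intro u hu v hv
    refine chernoff_gauss hXXmeas hXXmap hindep (cc u v) ?_ ht0
    have hsum : ∑ q, cc u v q ^ 2 = (∑ i, (u i) ^ 2) * (∑ k, (v k) ^ 2) := by
      rw [Fintype.sum_sum_type]
      simp only [hcc, Sum.elim_inl, Sum.elim_inr]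
      rw [Finset.sum_mul_sum]
      simp only [ne_eq, OfNat.ofNat_ne_zero, not_false_eq_true, zero_pow,
        Finset.sum_const_zero, zero_add]
      rw [Fintype.sum_prod_type]
      exact Finset.sum_congr rfl fun i _ => Finset.sum_congr rfl fun k _ => by ring
    rw [hsum, hcoords n u (hNn1 u hu), hcoords m v (hNm1 v hv), one_mul]
  -- probability of the bad event
  have hBadle : P Bad ≤ ENNReal.ofReal
      ((Nn.card : ℝ) * ((Nm.card : ℝ) * Real.exp (-(t ^ 2) / 2))) := by
    rw [hBadDef]
    calc P (⋃ u ∈ Nn, ⋃ v ∈ Nm, {ω | t ≤ ∑ q, cc u v q * XX q ω})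
        ≤ ∑ u ∈ Nn, P (⋃ v ∈ Nm, {ω | t ≤ ∑ q, cc u v q * XX q ω}) :=
          measure_biUnion_finset_le _ _
    _ ≤ ∑ u ∈ Nn, ∑ v ∈ Nm, P {ω | t ≤ ∑ q, cc u v q * XX q ω} :=
          Finset.sum_le_sum fun u _ => measure_biUnion_finset_le _ _
    _ ≤ ∑ _u ∈ Nn, ∑ _v ∈ Nm, ENNReal.ofReal (Real.exp (-(t ^ 2) / 2)) :=
          Finset.sum_le_sum fun u hu => Finset.sum_le_sum fun v hv => hpair u hu v hv
    _ = (Nn.card : ℝ≥0∞) * ((Nm.card : ℝ≥0∞) * ENNReal.ofReal (Real.exp (-(t ^ 2) / 2))) := by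
          simp [Finset.sum_const, nsmul_eq_mul, mul_assoc]
    _ = ENNReal.ofReal ((Nn.card : ℝ) * ((Nm.card : ℝ) * Real.exp (-(t ^ 2) / 2))) := by
          rw [ENNReal.ofReal_mul (Nat.cast_nonneg Nn.card),
            ENNReal.ofReal_mul (Nat.cast_nonneg Nm.card),
            ENNReal.ofReal_natCast, ENNReal.ofReal_natCast]
  -- numeric bound
  have h83 : (8:ℝ) ≤ Real.exp 3 := by
    have h := Real.exp_one_gt_d9
    have h3 : Real.exp 3 = Real.exp 1 * Real.exp 1 * Real.exp 1 := by
      rw [← Real.exp_add, ← Real.exp_add]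
      norm_num
    have he0 : (0:ℝ) < Real.exp 1 := Real.exp_pos 1
    rw [h3]
    nlinarith only [h, he0]
  have h8d : ∀ d : ℕ, (8:ℝ) ^ d ≤ Real.exp (3 * d) := by
    intro d
    calc (8:ℝ) ^ d ≤ (Real.exp 3) ^ d := pow_le_pow_left₀ (by norm_num) h83 d
    _ = Real.exp (d * 3) := (Real.exp_nat_mul 3 d).symm
    _ = Real.exp (3 * d) := by rw [mul_comm]
  have hXab : -κ ^ 2 * ((r:ℝ) ^ 2)⁻¹ * (n:ℝ) * εmn ^ 2 / (2 * σm ^ 2) = -(2 * a * b) := by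
    rw [hadef, hbdef]
    field_simp
    ring
  have hnum : (Nn.card : ℝ) * ((Nm.card : ℝ) * Real.exp (-(t ^ 2) / 2))
      ≤ Real.exp (-(2 * a * b)) := by
    have e1 : (Nn.card : ℝ) ≤ Real.exp (3 * n) := le_trans hNncard (h8d n)
    have e2 : (Nm.card : ℝ) ≤ Real.exp (3 * m) := le_trans hNmcard (h8d m)
    have hexp0 : (0:ℝ) < Real.exp (-(t ^ 2) / 2) := Real.exp_pos _
    calc (Nn.card : ℝ) * ((Nm.card : ℝ) * Real.exp (-(t ^ 2) / 2))
        ≤ Real.exp (3 * n) * (Real.exp (3 * m) * Real.exp (-(t ^ 2) / 2)) := by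
          have hc2 : (Nm.card : ℝ) * Real.exp (-(t ^ 2) / 2)
              ≤ Real.exp (3 * m) * Real.exp (-(t ^ 2) / 2) :=
            mul_le_mul_of_nonneg_right e2 hexp0.le
          have hc0 : (0:ℝ) ≤ (Nm.card : ℝ) * Real.exp (-(t ^ 2) / 2) := by positivity
          exact mul_le_mul e1 hc2 hc0 (Real.exp_pos _).le
    _ = Real.exp (3 * n + (3 * m + -(t ^ 2) / 2)) := by
          rw [Real.exp_add, Real.exp_add]
    _ ≤ Real.exp (-(2 * a * b)) := by
          rw [Real.exp_le_exp]
          have ht2 : t ^ 2 = T / 16 := by linarith [ht16]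
          rw [ht2, hTdef]
          linarith only [hna, hma, hapos.le, (mul_pos hapos hbpos).le]
  -- measurability of Bad
  have hBadmeas : MeasurableSet Bad := by
    rw [hBadDef]
    refine Finset.measurableSet_biUnion _ fun u _ => ?_
    refine Finset.measurableSet_biUnion _ fun v _ => ?_
    exact measurableSet_le measurable_const
      (Finset.measurable_sum _ fun q _ => (hXXmeas q).const_mul _)
  -- off the bad event the claimed inequality holds
  have hsub : Badᶜ ⊆ {ω | σm ^ 2 * (∑ j : Fin r, (n:ℝ)⁻¹ *
      ((W ω *ᵥ (fun a => Ehat ω a j)) ⬝ᵥ (W ω *ᵥ (fun a => Ehat ω a j)))) ≤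
      300 * κ * (sqFrob (Ehat ω) + εmn ^ 2)} := by
    intro ω hω
    simp only [hBadDef, Set.mem_compl_iff, Set.mem_iUnion, Set.mem_setOf_eq, not_exists,
      not_le, exists_prop, not_and] at hω
    have hinner : ∀ (u : EuclideanSpace ℝ (Fin n)) (v : EuclideanSpace ℝ (Fin m)),
        ⟪u, Matrix.toEuclideanLin (W ω) v⟫ = ∑ q, cc u v q * XX q ω := by
      intro u v
      rw [Fintype.sum_sum_type]
      simp only [hcc, hXX, Sum.elim_inl, Sum.elim_inr, zero_mul, Finset.sum_const_zero,
        zero_add]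
      rw [Fintype.sum_prod_type, PiLp.inner_apply]
      simp only [RCLike.inner_apply, conj_trivial]
      refine Finset.sum_congr rfl fun i _ => ?_
      have hfc : (Matrix.toEuclideanLin (W ω) v) i = ∑ k, W ω i k * v k := rfl
      rw [hfc, Finset.sum_mul]
      refine Finset.sum_congr rfl fun k _ => ?_
      rw [hW ω i k]
      ring
    have hopA : ∀ u ∈ Nn, ∀ v ∈ Nm, ⟪u, Matrix.toEuclideanLin (W ω) v⟫ ≤ t := by
      intro u hu v hv
      rw [hinner u v]
      exact (hω u hu v hv).le
    have hop := opnorm_of_net hm Nn Nm hNnnet hNmnet (W ω) ht0 hopA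
    -- column bounds
    have hcol : ∀ j : Fin r, ((W ω *ᵥ fun a => Ehat ω a j) ⬝ᵥ (W ω *ᵥ fun a => Ehat ω a j))
        ≤ T * (∑ a, (Ehat ω a j) ^ 2) := by
      intro j
      set ej : EuclideanSpace ℝ (Fin m) :=
        (WithLp.equiv 2 (Fin m → ℝ)).symm (fun a => Ehat ω a j) with hejdef
      have hcoord : ∀ i, (Matrix.toEuclideanLin (W ω) ej) i
          = (W ω *ᵥ fun a => Ehat ω a j) i := fun i => rfl
      have h1 : ((W ω *ᵥ fun a => Ehat ω a j) ⬝ᵥ (W ω *ᵥ fun a => Ehat ω a j))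
          = ‖Matrix.toEuclideanLin (W ω) ej‖ ^ 2 := by
        rw [EuclideanSpace.norm_eq, Real.sq_sqrt (by positivity)]
        simp only [Real.norm_eq_abs, sq_abs]
        simp only [dotProduct]
        exact Finset.sum_congr rfl fun i _ => by rw [hcoord i]; ring
      have h2 : ‖ej‖ ^ 2 = ∑ a, (Ehat ω a j) ^ 2 := by
        rw [EuclideanSpace.norm_eq, Real.sq_sqrt (by positivity)]
        simp only [Real.norm_eq_abs, sq_abs]
        exact Finset.sum_congr rfl fun a _ => by
          rw [show ej a = Ehat ω a j from rfl]
      have h3 := hop ej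
      have h4 := mul_self_le_mul_self (norm_nonneg (Matrix.toEuclideanLin (W ω) ej)) h3
      have h5 : ‖Matrix.toEuclideanLin (W ω) ej‖ ^ 2 ≤ 16 * t ^ 2 * ‖ej‖ ^ 2 := by
        nlinarith only [h4]
      rw [h1, ← h2, ← ht16]
      exact h5
    -- unit columns
    have h1col : ∀ j : Fin r, (∑ a, (Zhat ω a j) ^ 2) = 1 := by
      intro j
      have h := (hZhat ω).1
      have h2 := congrFun (congrFun h j) j
      simp only [Matrix.mul_apply, Matrix.transpose_apply, Matrix.one_apply_eq] at h2
      rw [← h2]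
      exact Finset.sum_congr rfl fun a _ => sq (Zhat ω a j)
    have htcol : ∀ j : Fin r, (∑ a, (Ztil a j) ^ 2) = 1 := by
      intro j
      have h2 := congrFun (congrFun hZtil1 j) j
      simp only [Matrix.mul_apply, Matrix.transpose_apply, Matrix.one_apply_eq] at h2
      rw [← h2]
      exact Finset.sum_congr rfl fun a _ => sq (Ztil a j)
    have hEcol : ∀ j : Fin r, (∑ a, (Ehat ω a j) ^ 2) ≤ 4 := by
      intro j
      have hEa : ∀ aa : Fin m, Ehat ω aa j = Zhat ω aa j - Ztil aa j := fun aa => by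
        rw [hEhat ω]
        rfl
      calc ∑ aa, (Ehat ω aa j) ^ 2
          ≤ ∑ aa, (2 * (Zhat ω aa j) ^ 2 + 2 * (Ztil aa j) ^ 2) :=
            Finset.sum_le_sum fun aa _ => by
              rw [hEa aa]
              nlinarith only [sq_nonneg (Zhat ω aa j + Ztil aa j)]
      _ = 2 * (∑ aa, (Zhat ω aa j) ^ 2) + 2 * (∑ aa, (Ztil aa j) ^ 2) := by
            rw [Finset.sum_add_distrib, Finset.mul_sum, Finset.mul_sum]
      _ = 4 := by rw [h1col j, htcol j]; norm_num
    have hsqF : sqFrob (Ehat ω) = ∑ j : Fin r, ∑ aa : Fin m, (Ehat ω aa j) ^ 2 := by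
      rw [sqFrob]
      exact Finset.sum_comm
    have hsqFle : sqFrob (Ehat ω) ≤ 4 * r := by
      rw [hsqF]
      calc ∑ j : Fin r, ∑ aa : Fin m, (Ehat ω aa j) ^ 2 ≤ ∑ _j : Fin r, (4:ℝ) :=
            Finset.sum_le_sum fun j _ => hEcol j
      _ = 4 * r := by simp [mul_comm]
    have hsqF0 : 0 ≤ sqFrob (Ehat ω) := by
      rw [sqFrob]
      positivity
    -- assemble
    have hmain : ∑ j : Fin r, (n:ℝ)⁻¹ *
        ((W ω *ᵥ fun a => Ehat ω a j) ⬝ᵥ (W ω *ᵥ fun a => Ehat ω a j))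
        ≤ (n:ℝ)⁻¹ * T * sqFrob (Ehat ω) := by
      calc ∑ j : Fin r, (n:ℝ)⁻¹ *
          ((W ω *ᵥ fun a => Ehat ω a j) ⬝ᵥ (W ω *ᵥ fun a => Ehat ω a j))
          ≤ ∑ j : Fin r, (n:ℝ)⁻¹ * (T * (∑ a, (Ehat ω a j) ^ 2)) :=
            Finset.sum_le_sum fun j _ =>
              mul_le_mul_of_nonneg_left (hcol j) (by positivity)
      _ = (n:ℝ)⁻¹ * T * (∑ j : Fin r, ∑ a, (Ehat ω a j) ^ 2) := by
            rw [Finset.mul_sum]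
            exact Finset.sum_congr rfl fun j _ => by ring
      _ = (n:ℝ)⁻¹ * T * sqFrob (Ehat ω) := by rw [← hsqF]
    have hTval : σm ^ 2 * ((n:ℝ)⁻¹ * T) = 300 * κ * (1 + b) := by
      rw [hTdef, hadef]
      field_simp
    have hκr : κ ≤ (r:ℝ) := hκκ0.trans hrR
    have hbr : b * (4 * (r:ℝ)) ≤ εmn ^ 2 := by
      have h1 : κ * (εmn ^ 2 * (4 * (r:ℝ))) ≤ (r:ℝ) * (εmn ^ 2 * (4 * (r:ℝ))) :=
        mul_le_mul_of_nonneg_right hκr (by positivity)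
      rw [hbdef, div_mul_eq_mul_div, div_le_iff₀ (by positivity)]
      nlinarith only [h1]
    have hbsF : b * sqFrob (Ehat ω) ≤ εmn ^ 2 := by
      have h1 : b * sqFrob (Ehat ω) ≤ b * (4 * r) := mul_le_mul_of_nonneg_left hsqFle hbpos.le
      linarith only [h1, hbr]
    show σm ^ 2 * (∑ j : Fin r, (n:ℝ)⁻¹ *
        ((W ω *ᵥ fun a => Ehat ω a j) ⬝ᵥ (W ω *ᵥ fun a => Ehat ω a j)))
        ≤ 300 * κ * (sqFrob (Ehat ω) + εmn ^ 2)
    calc σm ^ 2 * (∑ j : Fin r, (n:ℝ)⁻¹ *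
        ((W ω *ᵥ fun a => Ehat ω a j) ⬝ᵥ (W ω *ᵥ fun a => Ehat ω a j)))
        ≤ σm ^ 2 * ((n:ℝ)⁻¹ * T * sqFrob (Ehat ω)) :=
          mul_le_mul_of_nonneg_left hmain hσ2.le
    _ = 300 * κ * (1 + b) * sqFrob (Ehat ω) := by
          rw [← hTval]
          ring
    _ ≤ 300 * κ * (sqFrob (Ehat ω) + εmn ^ 2) := by
          nlinarith only [mul_le_mul_of_nonneg_left hbsF
            (by positivity : (0:ℝ) ≤ 300 * κ), hsqF0, hκpos.le]
  -- finish
  have hPB : P Bad ≤ ENNReal.ofReal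
      (Real.exp (-κ ^ 2 * ((r:ℝ) ^ 2)⁻¹ * (n:ℝ) * εmn ^ 2 / (2 * σm ^ 2))) := by
    refine le_trans hBadle (ENNReal.ofReal_le_ofReal ?_)
    rw [hXab]
    exact hnum
  calc ENNReal.ofReal (1 - 1 *
        Real.exp (-κ ^ 2 * ((r:ℝ) ^ 2)⁻¹ * (n:ℝ) * εmn ^ 2 / (2 * σm ^ 2)))
      = 1 - ENNReal.ofReal
        (Real.exp (-κ ^ 2 * ((r:ℝ) ^ 2)⁻¹ * (n:ℝ) * εmn ^ 2 / (2 * σm ^ 2))) := by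
        rw [one_mul, ENNReal.ofReal_sub _ (Real.exp_pos _).le, ENNReal.ofReal_one]
  _ ≤ 1 - P Bad := tsub_le_tsub_left hPB 1
  _ = P Badᶜ := (prob_compl_eq_one_sub hBadmeas).symm
  _ ≤ _ := measure_mono hsub

end
end
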